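/- arXiv:2207.05119 — 3 statements merged into one kernel-verified Lean document; each statement's English description precedes it below -/
import Mathlib

section
/- A permutation w in S_n has a reduced word with all distinct letters if and only if w avoids both of the patterns 321 and 3412. -/
/-- The simple transposition `s_i` in `S_n`, swapping positions `i` and `i+1`
(1-indexed, so valid for `1 ≤ i ≤ n-1`); otherwise the identity. -/
def simpleT (n : ℕ) (i : ℕ) : Equiv.Perm (Fin n) :=
  if h : 1 ≤ i ∧ i < n then Equiv.swap ⟨i - 1, by omega⟩ ⟨i, h.2⟩ else 1

/-- `l` is a word in the simple transpositions `s_1, …, s_{n-1}` with product `w`. -/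
def IsWord (n : ℕ) (w : Equiv.Perm (Fin n)) (l : List ℕ) : Prop :=
  (∀ i ∈ l, 1 ≤ i ∧ i < n) ∧ (l.map (simpleT n)).prod = w

/-- The Coxeter length of `w`. -/
noncomputable def coxLength (n : ℕ) (w : Equiv.Perm (Fin n)) : ℕ :=
  sInf {k | ∃ l, IsWord n w l ∧ l.length = k}

/-- A reduced word for `w`: a word of minimal length. -/
def IsReducedWord (n : ℕ) (w : Equiv.Perm (Fin n)) (l : List ℕ) : Prop :=
  IsWord n w l ∧ l.length = coxLength n w

/-- A run: a nonempty word of consecutive integers, increasing or decreasing. -/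
def IsRun (r : List ℕ) : Prop :=
  r ≠ [] ∧ (List.Chain' (fun a b => b = a + 1) r ∨ List.Chain' (fun a b => a = b + 1) r)

/-- `run(w)`: the minimum number of runs whose concatenation is a reduced word of `w`. -/
noncomputable def runStat (n : ℕ) (w : Equiv.Perm (Fin n)) : ℕ :=
  sInf {k | ∃ rs : List (List ℕ), rs.length = k ∧ (∀ r ∈ rs, IsRun r) ∧
    IsReducedWord n w rs.flatten}

/-- One-line notation of `w`, with entries `1, …, n`. -/
def oneLine {n : ℕ} (w : Equiv.Perm (Fin n)) : List ℕ :=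
  List.ofFn (fun i => (w i : ℕ) + 1)

/-- Length of a longest increasing subsequence of the one-line notation of `w`. -/
noncomputable def lisLen {n : ℕ} (w : Equiv.Perm (Fin n)) : ℕ :=
  sSup {k | ∃ l : List ℕ, l.Sublist (oneLine w) ∧ l.Pairwise (· < ·) ∧ l.length = k}

/-- Schensted row insertion: insert `x` into row `r`, possibly bumping an entry. -/
def rowInsert (r : List ℕ) (x : ℕ) : List ℕ × Option ℕ :=
  match r.findIdx? (fun y => decide (x < y)) with
  | none => (r ++ [x], none)
  | some i => (r.set i x, r[i]?)

/-- Schensted insertion of `x` into a tableau (list of rows). -/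
def bumpInsert : List (List ℕ) → ℕ → List (List ℕ)
  | [], x => [[x]]
  | r :: rest, x =>
    match rowInsert r x with
    | (r', none) => r' :: rest
    | (r', some y) => r' :: bumpInsert rest y

/-- The RSK insertion tableau of a word. -/
def Ptab (w : List ℕ) : List (List ℕ) := w.foldl bumpInsert []

/-- The index of the row where the new box appeared, going from `p` to `p'`. -/
def recRow (p p' : List (List ℕ)) : ℕ :=
  (List.range p'.length).findIdx
    (fun j => decide ((p.getD j []).length < (p'.getD j []).length))

/-- Add entry `v` at the end of row `j` of `q`. -/
def addAt (q : List (List ℕ)) (j v : ℕ) : List (List ℕ) :=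
  if j < q.length then q.set j ((q.getD j []) ++ [v]) else q ++ [[v]]

/-- The RSK recording tableau of a word. -/
def Qtab (w : List ℕ) : List (List ℕ) :=
  ((w.zipIdx.map Prod.swap).foldl (fun pq ix =>
    let p' := bumpInsert pq.1 ix.2
    (p', addAt pq.2 (recRow pq.1 p') (ix.1 + 1))) (([], []) : List (List ℕ) × List (List ℕ))).2

/-- The second row of a tableau. -/
def Row2 (t : List (List ℕ)) : List ℕ := t.getD 1 []

/-- A set `L` of integers is uncrowded if every interval `[y, y+2x]` contains
at most `x+1` elements of `L`. -/
def Uncrowded (L : Set ℤ) : Prop :=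
  ∀ (y : ℤ) (x : ℕ), 0 < x → ({z : ℤ | y ≤ z ∧ z ≤ y + 2 * (x : ℤ)} ∩ L).ncard ≤ x + 1

/-- `w` is boolean: some reduced word of `w` has all distinct letters. -/
def BooleanPerm (n : ℕ) (w : Equiv.Perm (Fin n)) : Prop :=
  ∃ l, IsReducedWord n w l ∧ l.Nodup

/-- `w` avoids the pattern `321`. -/
def Avoids321 {n : ℕ} (w : Equiv.Perm (Fin n)) : Prop :=
  ¬ ∃ i j k : Fin n, i < j ∧ j < k ∧ w k < w j ∧ w j < w i

/-- `w` avoids the pattern `3412`. -/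
def Avoids3412 {n : ℕ} (w : Equiv.Perm (Fin n)) : Prop :=
  ¬ ∃ i j k l : Fin n, i < j ∧ j < k ∧ k < l ∧ w k < w l ∧ w l < w i ∧ w i < w j

/-- The support of `w`: the letters appearing in reduced words of `w`. -/
def Supp (n : ℕ) (w : Equiv.Perm (Fin n)) : Set ℕ :=
  {i | ∃ l, IsReducedWord n w l ∧ i ∈ l}

/-- The entries of a row, as a set of integers. -/
def entrySet (r : List ℕ) : Set ℤ := {z | ∃ x ∈ r, (x : ℤ) = z}

/-- `(r1, r2)` are the rows of a standard Young tableau of size `n` with at most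
two rows (entries `1, …, n`). -/
def IsSYT2 (n : ℕ) (r1 r2 : List ℕ) : Prop :=
  r1.Pairwise (· < ·) ∧ r2.Pairwise (· < ·) ∧ r2.length ≤ r1.length ∧
  (∀ i < r2.length, r1.getD i 0 < r2.getD i 0) ∧
  (r1 ++ r2).Perm (List.range' 1 n)

/-- The tableau (list of nonempty rows) with rows `r1`, `r2`. -/
def tab2 (r1 r2 : List ℕ) : List (List ℕ) :=
  if r2 = [] then (if r1 = [] then [] else [r1]) else [r1, r2]

/-- Every maximal block of `1`s (`true`s) in the binary word has odd length. -/
def OddBlocks (l : List Bool) : Prop :=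
  ∀ l₁ l₂ l₃ : List Bool, l = l₁ ++ l₂ ++ l₃ → l₂ ≠ [] → (∀ b ∈ l₂, b = true) →
    l₁.getLast? ≠ some true → l₃.head? ≠ some true → Odd l₂.length


namespace Stmt6Aux
variable {n : ℕ}

lemma simpleT_apply {d : ℕ} (h1 : 1 ≤ d) (h2 : d < n) (v : Fin n) :
    ((simpleT n d) v : ℕ) = if (v : ℕ) = d - 1 then d else if (v : ℕ) = d then d - 1 else v := by
  unfold simpleT
  rw [dif_pos ⟨h1, h2⟩]
  rcases v with ⟨v, hv⟩
  rw [Equiv.swap_apply_def]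
  simp only [Fin.mk.injEq, Fin.ext_iff]
  split_ifs <;> simp_all <;> omega

lemma simpleT_mul_self {d : ℕ} : simpleT n d * simpleT n d = 1 := by
  unfold simpleT
  split_ifs with h
  · exact Equiv.swap_mul_self _ _
  · simp

lemma simpleT_lt {d : ℕ} (h1 : 1 ≤ d) (h2 : d < n) (u v : Fin n) :
    simpleT n d u < simpleT n d v ↔
      (((u : ℕ) = d ∧ (v : ℕ) = d - 1) ∨ (u < v ∧ ¬((u : ℕ) = d - 1 ∧ (v : ℕ) = d))) := by
  rw [Fin.lt_def, Fin.lt_def, simpleT_apply h1 h2, simpleT_apply h1 h2]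
  have := u.isLt; have := v.isLt
  split_ifs <;> omega

/-- position of value `v` in `w` -/
def pw (w : Equiv.Perm (Fin n)) (v : ℕ) : ℕ :=
  if h : v < n then ((w.symm ⟨v, h⟩ : Fin n) : ℕ) else 0

lemma pw_lt (w : Equiv.Perm (Fin n)) {v : ℕ} (h : v < n) : pw w v < n := by
  simp only [pw, dif_pos h]; exact (w.symm _).isLt

lemma apply_pw (w : Equiv.Perm (Fin n)) {v : ℕ} (h : v < n) :
    w ⟨pw w v, pw_lt w h⟩ = ⟨v, h⟩ := by
  have : (⟨pw w v, pw_lt w h⟩ : Fin n) = w.symm ⟨v, h⟩ := by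
    apply Fin.ext; simp [pw, dif_pos h]
  rw [this, Equiv.apply_symm_apply]

lemma val_eq_iff (w : Equiv.Perm (Fin n)) {v : ℕ} (h : v < n) (x : Fin n) :
    ((w x : ℕ) = v) ↔ (x : ℕ) = pw w v := by
  constructor
  · intro hx
    have : w x = ⟨v, h⟩ := Fin.ext hx
    have : x = w.symm ⟨v, h⟩ := by rw [← this, Equiv.symm_apply_apply]
    rw [this]; simp [pw, dif_pos h]
  · intro hx
    have : x = ⟨pw w v, pw_lt w h⟩ := Fin.ext hx
    rw [this, apply_pw w h]

lemma pw_inj (w : Equiv.Perm (Fin n)) {v1 v2 : ℕ} (h1 : v1 < n) (h2 : v2 < n)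
    (h : pw w v1 = pw w v2) : v1 = v2 := by
  have e1 := apply_pw w h1
  have e2 := apply_pw w h2
  have : (⟨pw w v1, pw_lt w h1⟩ : Fin n) = ⟨pw w v2, pw_lt w h2⟩ := Fin.ext h
  rw [this, e2] at e1
  exact (Fin.ext_iff.1 e1.symm)


/-- crossing statistic -/
def cstat (i : ℕ) (w : Equiv.Perm (Fin n)) : ℕ :=
  (Finset.univ.filter (fun x : Fin n => (x : ℕ) < i ∧ i ≤ (w x : ℕ))).card

lemma cstat_one (i : ℕ) : cstat i (1 : Equiv.Perm (Fin n)) = 0 := by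
  simp only [cstat, Finset.card_eq_zero, Finset.filter_eq_empty_iff]
  intro x _
  simp only [Equiv.Perm.one_apply]
  omega

lemma cstat_mul {i d : ℕ} (h1 : 1 ≤ d) (h2 : d < n) (hne : i ≠ d) (w : Equiv.Perm (Fin n)) :
    cstat i (simpleT n d * w) = cstat i w := by
  unfold cstat
  congr 1
  apply Finset.filter_congr
  intro x _
  simp only [Equiv.Perm.mul_apply, and_congr_right_iff]
  intro _
  rw [simpleT_apply h1 h2 (w x)]
  have := (w x).isLt
  split_ifs <;> omega

lemma word_cstat {l : List ℕ} (hv : ∀ j ∈ l, 1 ≤ j ∧ j < n) {i : ℕ} (hi : i ∉ l) :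
    cstat i ((l.map (simpleT n)).prod) = 0 := by
  induction l with
  | nil => simpa using cstat_one i
  | cons d l' ih =>
    have hd := hv d (by simp)
    have : (((d :: l').map (simpleT n)).prod) = simpleT n d * ((l'.map (simpleT n)).prod) := by
      simp
    rw [this, cstat_mul hd.1 hd.2 (by rintro rfl; exact hi List.mem_cons_self)]
    exact ih (fun j hj => hv j (List.mem_cons_of_mem _ hj)) (fun h => hi (List.mem_cons_of_mem _ h))

lemma cstat_zero_split {d : ℕ} (h2 : d < n) {w : Equiv.Perm (Fin n)}
    (h : cstat d w = 0) (x : Fin n) : (x : ℕ) < d ↔ (w x : ℕ) < d := by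
  have hall : ∀ y : Fin n, (y : ℕ) < d → (w y : ℕ) < d := by
    intro y hy
    by_contra hc
    have : y ∈ Finset.univ.filter (fun x : Fin n => (x : ℕ) < d ∧ d ≤ (w x : ℕ)) := by
      simp [hy]; omega
    rw [Finset.card_eq_zero.1 h] at this
    simp at this
  constructor
  · exact hall x
  · intro hx
    -- image argument
    set S : Finset (Fin n) := Finset.univ.filter (fun y : Fin n => (y : ℕ) < d) with hS
    have hcardS : S.card = d := by
      have : S = Finset.Iio (⟨d, h2⟩ : Fin n) := by
        ext y; simp [hS, Finset.mem_Iio, Fin.lt_def]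
      rw [this, Fin.card_Iio]
    have himg : S.image w ⊆ S := by
      intro y hy
      simp only [Finset.mem_image] at hy
      obtain ⟨z, hz, rfl⟩ := hy
      simp only [hS, Finset.mem_filter, Finset.mem_univ, true_and] at hz ⊢
      exact hall z hz
    have hcardi : (S.image w).card = S.card := Finset.card_image_of_injective _ w.injective
    have heq : S.image w = S := Finset.eq_of_subset_of_card_le himg (le_of_eq hcardi.symm)
    have : w x ∈ S := by simp [hS, hx]
    rw [← heq] at this
    simp only [Finset.mem_image] at this
    obtain ⟨z, hz, hzx⟩ := this
    have : z = x := w.injective hzx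
    subst this
    simpa [hS] using hz


def invSet (w : Equiv.Perm (Fin n)) : Finset (Fin n × Fin n) :=
  Finset.univ.filter (fun p => p.1 < p.2 ∧ w p.2 < w p.1)

def invNum (w : Equiv.Perm (Fin n)) : ℕ := (invSet w).card

lemma invNum_one : invNum (1 : Equiv.Perm (Fin n)) = 0 := by
  simp only [invNum, invSet, Finset.card_eq_zero, Finset.filter_eq_empty_iff]
  rintro ⟨x, y⟩ _
  simp only [Equiv.Perm.one_apply, not_and]
  intro h1 h2
  exact absurd h1 (asymm h2)

lemma eq_one_of_strictMono {w : Equiv.Perm (Fin n)} (h : StrictMono (w : Fin n → Fin n)) :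
    w = 1 := by
  have inst : WellFoundedLT (Fin n) := inferInstance
  have : (w : Fin n → Fin n) = id :=
    (@StrictMono.range_inj (Fin n) (Fin n) _ _ inst (w : Fin n → Fin n) id h strictMono_id).1
      (by rw [Set.range_id, Equiv.range_eq_univ])
  ext x
  simp [congrFun this x]

lemma eq_one_of_invNum_zero {w : Equiv.Perm (Fin n)} (h : invNum w = 0) : w = 1 := by
  apply eq_one_of_strictMono
  intro x y hxy
  have hne : w x ≠ w y := fun hc => absurd (w.injective hc) (ne_of_lt hxy)
  rcases lt_or_gt_of_ne hne with h' | h'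
  · exact h'
  · exfalso
    have : (x, y) ∈ invSet w := by simp [invSet, hxy, h']
    rw [Finset.card_eq_zero.1 h] at this
    simp at this

lemma invSet_mul_mem {d : ℕ} (h1 : 1 ≤ d) (h2 : d < n) (w : Equiv.Perm (Fin n)) (x y : Fin n) :
    (x, y) ∈ invSet (simpleT n d * w) ↔
      x < y ∧ (((x : ℕ) = pw w (d-1) ∧ (y : ℕ) = pw w d) ∨
        (w y < w x ∧ ¬((x : ℕ) = pw w d ∧ (y : ℕ) = pw w (d-1)))) := by
  have hd1 : d - 1 < n := by omega
  simp only [invSet, Finset.mem_filter, Finset.mem_univ, true_and]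
  simp only [Equiv.Perm.mul_apply]
  rw [simpleT_lt h1 h2]
  simp only [val_eq_iff w h2, val_eq_iff w hd1]
  tauto

lemma invSet_mul_desc {d : ℕ} (h1 : 1 ≤ d) (h2 : d < n) (w : Equiv.Perm (Fin n)) (hdesc : pw w d < pw w (d-1)) :
    invSet (simpleT n d * w) =
      (invSet w).erase (⟨pw w d, pw_lt w h2⟩, ⟨pw w (d-1), pw_lt w (by omega)⟩) := by
  have hd1 : d - 1 < n := by omega
  ext ⟨x, y⟩
  rw [invSet_mul_mem h1 h2 w x y, Finset.mem_erase]
  simp only [invSet, Finset.mem_filter, Finset.mem_univ, true_and, Prod.mk.injEq, Fin.ext_iff, ne_eq]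
  constructor
  · rintro ⟨hxy, hcase⟩
    rcases hcase with ⟨ha, hb⟩ | ⟨hinv, hnot⟩
    · exfalso
      rw [Fin.lt_def, ha, hb] at hxy
      omega
    · exact ⟨by rintro ⟨ha, hb⟩; exact hnot ⟨ha, hb⟩, hxy, hinv⟩
  · rintro ⟨hne, hxy, hinv⟩
    exact ⟨hxy, Or.inr ⟨hinv, by rintro ⟨ha, hb⟩; exact hne ⟨ha, hb⟩⟩⟩

lemma invSet_mul_asc {d : ℕ} (h1 : 1 ≤ d) (h2 : d < n) (w : Equiv.Perm (Fin n)) (hasc : pw w (d-1) < pw w d) :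
    invSet (simpleT n d * w) =
      insert (⟨pw w (d-1), pw_lt w (by omega)⟩, ⟨pw w d, pw_lt w h2⟩) (invSet w) := by
  have hd1 : d - 1 < n := by omega
  ext ⟨x, y⟩
  rw [invSet_mul_mem h1 h2 w x y, Finset.mem_insert]
  simp only [invSet, Finset.mem_filter, Finset.mem_univ, true_and, Prod.mk.injEq, Fin.ext_iff]
  constructor
  · rintro ⟨hxy, hcase⟩
    rcases hcase with ⟨ha, hb⟩ | ⟨hinv, hnot⟩
    · exact Or.inl ⟨ha, hb⟩
    · exact Or.inr ⟨hxy, hinv⟩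
  · rintro (⟨ha, hb⟩ | ⟨hxy, hinv⟩)
    · exact ⟨by rw [Fin.lt_def, ha, hb]; exact hasc, Or.inl ⟨ha, hb⟩⟩
    · refine ⟨hxy, Or.inr ⟨hinv, ?_⟩⟩
      rintro ⟨ha, hb⟩
      rw [Fin.lt_def, ha, hb] at hxy
      exact absurd hasc (by omega)

lemma mem_invSet_desc {d : ℕ} (h1 : 1 ≤ d) (h2 : d < n) (w : Equiv.Perm (Fin n)) (hdesc : pw w d < pw w (d-1)) :
    ((⟨pw w d, pw_lt w h2⟩ : Fin n), (⟨pw w (d-1), pw_lt w (by omega : d - 1 < n)⟩ : Fin n)) ∈ invSet w := by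
  have hd1 : d - 1 < n := by omega
  simp only [invSet, Finset.mem_filter, Finset.mem_univ, true_and]
  constructor
  · exact hdesc
  · rw [apply_pw w h2, apply_pw w hd1]
    exact Fin.mk_lt_mk.2 (by omega)

lemma invNum_desc {d : ℕ} (h1 : 1 ≤ d) (h2 : d < n) (w : Equiv.Perm (Fin n)) (hdesc : pw w d < pw w (d-1)) :
    invNum w = invNum (simpleT n d * w) + 1 := by
  have hm := mem_invSet_desc h1 h2 w hdesc
  have h0 : 0 < (invSet w).card := Finset.card_pos.2 ⟨_, hm⟩
  rw [invNum, invNum, invSet_mul_desc h1 h2 w hdesc, Finset.card_erase_of_mem hm]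
  omega

lemma notmem_invSet_asc {d : ℕ} (h1 : 1 ≤ d) (h2 : d < n) (w : Equiv.Perm (Fin n)) (hasc : pw w (d-1) < pw w d) :
    ((⟨pw w (d-1), pw_lt w (by omega : d - 1 < n)⟩ : Fin n), (⟨pw w d, pw_lt w h2⟩ : Fin n)) ∉ invSet w := by
  have hd1 : d - 1 < n := by omega
  simp only [invSet, Finset.mem_filter, Finset.mem_univ, true_and, not_and]
  intro _
  rw [apply_pw w h2, apply_pw w hd1]
  intro hc
  have := Fin.mk_lt_mk.1 hc
  omega

lemma invNum_mul_le {d : ℕ} (h1 : 1 ≤ d) (h2 : d < n) (w : Equiv.Perm (Fin n)) :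
    invNum (simpleT n d * w) ≤ invNum w + 1 := by
  have hd1 : d - 1 < n := by omega
  have hne : pw w (d-1) ≠ pw w d := fun h => by
    have := pw_inj w hd1 h2 h; omega
  rcases lt_or_gt_of_ne hne with h | h
  · rw [invNum, invNum, invSet_mul_asc h1 h2 w h]
    exact Finset.card_insert_le _ _
  · rw [invNum, invNum, invSet_mul_desc h1 h2 w h]
    exact le_trans (Finset.card_erase_le) (by omega)

lemma invNum_word_le {l : List ℕ} (hv : ∀ j ∈ l, 1 ≤ j ∧ j < n) :
    invNum ((l.map (simpleT n)).prod) ≤ l.length := by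
  induction l with
  | nil => simp [invNum_one]
  | cons d l' ih =>
    have hd := hv d (by simp)
    have heq : (((d :: l').map (simpleT n)).prod) = simpleT n d * ((l'.map (simpleT n)).prod) := by
      simp
    rw [heq]
    calc invNum (simpleT n d * (l'.map (simpleT n)).prod)
        ≤ invNum ((l'.map (simpleT n)).prod) + 1 := invNum_mul_le hd.1 hd.2 _
      _ ≤ l'.length + 1 := by
          have := ih (fun j hj => hv j (List.mem_cons_of_mem _ hj))
          omega
      _ = (d :: l').length := by simp


/-- increasing chain gives `j ≤ pw w j` -/
lemma chain_ge {w : Equiv.Perm (Fin n)} {m : ℕ}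
    (hch : ∀ e, 1 ≤ e → e < m → pw w (e-1) < pw w e) :
    ∀ j, j < m → j ≤ pw w j := by
  intro j
  induction j with
  | zero => omega
  | succ j ih =>
    intro hj
    have h1 := ih (by omega)
    have h2 := hch (j+1) (by omega) hj
    simp only [Nat.add_sub_cancel] at h2
    omega

lemma chain_eq {w : Equiv.Perm (Fin n)} {m : ℕ} (hm : 1 ≤ m)
    (hch : ∀ e, 1 ≤ e → e < m → pw w (e-1) < pw w e)
    (htop : pw w (m-1) = m-1) : ∀ j, j < m → pw w j = j := by
  have key : ∀ t j, j + t = m - 1 → pw w j = j := by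
    intro t
    induction t with
    | zero =>
      intro j hj
      have : j = m - 1 := by omega
      rw [this]; exact htop
    | succ t ih =>
      intro j hj
      have hnext := ih (j+1) (by omega)
      have h2 := hch (j+1) (by omega) (by omega)
      simp only [Nat.add_sub_cancel] at h2
      have h3 := chain_ge hch j (by omega)
      omega
  intro j hj
  exact key (m - 1 - j) j (by omega)

lemma eq_one_of_no_desc {w : Equiv.Perm (Fin n)}
    (h : ∀ e, 1 ≤ e → e < n → ¬(pw w e < pw w (e-1))) : w = 1 := by
  have hch : ∀ e, 1 ≤ e → e < n → pw w (e-1) < pw w e := by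
    intro e he1 he2
    have hne : pw w (e-1) ≠ pw w e := by
      intro hc
      have := pw_inj w (by omega : e - 1 < n) (by omega : e < n) hc
      omega
    have := h e he1 he2
    omega
  ext x
  rcases Nat.eq_zero_or_pos n with hn | hn
  · exact absurd x.isLt (by omega)
  have htop : pw w (n-1) = n-1 := by
    have := chain_ge hch (n-1) (by omega)
    have := pw_lt w (by omega : n - 1 < n)
    omega
  have hall := chain_eq hn hch htop
  have hx := (val_eq_iff w (w x).isLt x).1 rfl
  rw [hall (w x : ℕ) (w x).isLt] at hx
  simp [hx.symm]

lemma cstat_pos_of_desc {d : ℕ} (h1 : 1 ≤ d) (h2 : d < n) (w : Equiv.Perm (Fin n))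
    (hdesc : pw w d < pw w (d-1)) : 0 < cstat d w := by
  have hd1 : d - 1 < n := by omega
  by_contra hc
  have hz : cstat d w = 0 := by omega
  have hsplit := cstat_zero_split h2 hz
  have hB' := hsplit ⟨pw w d, pw_lt w h2⟩
  have hA' := hsplit ⟨pw w (d-1), pw_lt w hd1⟩
  rw [apply_pw w h2] at hB'
  rw [apply_pw w hd1] at hA'
  simp only [Fin.val_mk] at hB' hA'
  omega

/-- Claim C: smallest descent `d` kills letter `d` -/
lemma cstat_zero_of_min_desc {d : ℕ} (h1 : 1 ≤ d) (h2 : d < n) (w : Equiv.Perm (Fin n))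
    (hdesc : pw w d < pw w (d-1))
    (hmin : ∀ e, 1 ≤ e → e < d → pw w (e-1) < pw w e)
    (h3 : Avoids321 w) (h4 : Avoids3412 w) :
    cstat d (simpleT n d * w) = 0 := by
  have hd1 : d - 1 < n := by omega
  set a := pw w (d-1) with ha
  set b := pw w d with hb
  have hba : b < a := hdesc
  have hbn : b < n := pw_lt w h2
  have han : a < n := pw_lt w hd1
  -- Step: a ≥ d
  have hage : d ≤ a := by
    by_contra hc
    have hge := chain_ge (w := w) (m := d) hmin (d-1) (by omega)
    have htop : pw w (d-1) = d - 1 := by omega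
    have hall := chain_eq h1 hmin htop
    have hb2 : pw w b = b := hall b (by omega)
    have := pw_inj w hbn h2 (by rw [hb2])
    omega
  -- main
  unfold cstat
  rw [Finset.card_eq_zero, Finset.filter_eq_empty_iff]
  intro x _
  rintro ⟨hxd, hge⟩
  rw [Equiv.Perm.mul_apply, simpleT_apply h1 h2] at hge
  by_cases hc1 : ((w x : ℕ) = d - 1)
  · -- x = A, contradiction with a ≥ d
    have := (val_eq_iff w hd1 x).1 hc1
    omega
  · by_cases hc2 : ((w x : ℕ) = d)
    · rw [if_neg hc1, if_pos hc2] at hge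
      omega
    · rw [if_neg hc1, if_neg hc2] at hge
      -- now v := (w x).val ≥ d + 1
      have hv : d + 1 ≤ (w x : ℕ) := by omega
      have hxb : (x : ℕ) ≠ b := by
        intro hxb
        have := (val_eq_iff w h2 x).2 hxb
        omega
      set A : Fin n := ⟨a, han⟩ with hAdef
      set B : Fin n := ⟨b, hbn⟩ with hBdef
      have wA : w A = ⟨d-1, hd1⟩ := apply_pw w hd1
      have wB : w B = ⟨d, h2⟩ := apply_pw w h2
      rcases lt_or_gt_of_ne hxb with hlt | hgt
      · -- x before B : 321 at (x, B, A)
        apply h3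
        refine ⟨x, B, A, ?_, ?_, ?_, ?_⟩
        · exact Fin.lt_def.2 hlt
        · exact Fin.lt_def.2 hba
        · rw [wA, wB]; exact Fin.mk_lt_mk.2 (by omega)
        · rw [wB]; exact Fin.lt_def.2 (by simp only [Fin.val_mk]; omega)
      · -- B before x : find small value after x, 3412 at (B, x, R, A)
        have hex : ∃ c, c < d - 1 ∧ (x : ℕ) < pw w c := by
          by_contra hcon
          push_neg at hcon
          have hsub : (Finset.range (d-1)).image (pw w) ⊆ (Finset.range (x : ℕ)).erase b := by
            intro p hp
            simp only [Finset.mem_image, Finset.mem_range] at hp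
            obtain ⟨c, hc, rfl⟩ := hp
            have hle := hcon c hc
            have hne1 : pw w c ≠ (x : ℕ) := by
              intro hceq
              have := (val_eq_iff w (by omega : c < n) x).2 hceq.symm
              omega
            have hne2 : pw w c ≠ b := by
              intro hceq
              have := pw_inj w (by omega : c < n) h2 (by rw [hceq])
              omega
            rw [Finset.mem_erase, Finset.mem_range]
            exact ⟨hne2, by omega⟩
          have hcard1 : ((Finset.range (d-1)).image (pw w)).card = d - 1 := by
            rw [Finset.card_image_of_injOn, Finset.card_range]
            intro c1 hc1' c2 hc2' hcc
            simp only [Finset.coe_range, Set.mem_Iio] at hc1' hc2'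
            exact pw_inj w (by omega) (by omega) hcc
          have hcard2 : ((Finset.range (x : ℕ)).erase b).card = (x : ℕ) - 1 := by
            rw [Finset.card_erase_of_mem (Finset.mem_range.2 (by omega)), Finset.card_range]
          have := Finset.card_le_card hsub
          omega
        obtain ⟨c, hc, hcx⟩ := hex
        have hcn : c < n := by omega
        set r := pw w c with hr
        have hrn : r < n := pw_lt w hcn
        have hra : r < a := by
          -- chain monotone: c < d-1 implies pw c < pw (d-1)
          have : ∀ t, c + t ≤ d - 1 → pw w c ≤ pw w (c + t) := by
            intro t
            induction t with
            | zero => simp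
            | succ t iht =>
              intro htle
              have hstep := hmin (c + t + 1) (by omega) (by omega)
              simp only [Nat.add_sub_cancel] at hstep
              have := iht (by omega)
              have heq : c + (t + 1) = c + t + 1 := by omega
              rw [heq]
              omega
          have h5 := this (d - 1 - c) (by omega)
          have h6 : c + (d - 1 - c) = d - 1 := by omega
          rw [h6] at h5
          have hne : r ≠ a := fun hc' => by
            have := pw_inj w hcn hd1 hc'
            omega
          omega
        set R : Fin n := ⟨r, hrn⟩ with hRdef
        have wR : w R = ⟨c, hcn⟩ := apply_pw w hcn
        apply h4
        refine ⟨B, x, R, A, ?_, ?_, ?_, ?_, ?_, ?_⟩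
        · exact Fin.lt_def.2 hgt
        · exact Fin.lt_def.2 hcx
        · exact Fin.lt_def.2 hra
        · rw [wR, wA]; exact Fin.mk_lt_mk.2 (by omega)
        · rw [wA, wB]; exact Fin.mk_lt_mk.2 (by omega)
        · rw [wB]; exact Fin.lt_def.2 (by simp only [Fin.val_mk]; omega)


lemma mul_lt_pres {d : ℕ} (h1 : 1 ≤ d) (h2 : d < n) (w : Equiv.Perm (Fin n)) (x y : Fin n)
    (hA : ¬((x : ℕ) = pw w d ∧ (y : ℕ) = pw w (d-1)))
    (hB : ¬((x : ℕ) = pw w (d-1) ∧ (y : ℕ) = pw w d)) :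
    ((simpleT n d * w) x < (simpleT n d * w) y ↔ w x < w y) := by
  have hd1 : d - 1 < n := by omega
  simp only [Equiv.Perm.mul_apply]
  rw [simpleT_lt h1 h2]
  simp only [val_eq_iff w h2, val_eq_iff w hd1]
  tauto

lemma mkSetup {d : ℕ} (h2 : d < n) (w : Equiv.Perm (Fin n)) (hd1 : d - 1 < n) :
    ∃ (A B : Fin n), (A : ℕ) = pw w (d-1) ∧ (B : ℕ) = pw w d :=
  ⟨⟨pw w (d-1), pw_lt w hd1⟩, ⟨pw w d, pw_lt w h2⟩, rfl, rfl⟩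

lemma avoids_mul_of_desc {d : ℕ} (h1 : 1 ≤ d) (h2 : d < n) {w : Equiv.Perm (Fin n)}
    (hdesc : pw w d < pw w (d-1)) (h3 : Avoids321 w) (h4 : Avoids3412 w) :
    Avoids321 (simpleT n d * w) ∧ Avoids3412 (simpleT n d * w) := by
  have hd1 : d - 1 < n := by omega
  obtain ⟨A, B, hAv, hBv⟩ := mkSetup h2 w hd1
  have wA : w A = ⟨d-1, hd1⟩ := Fin.ext ((val_eq_iff w hd1 A).2 hAv)
  have wB : w B = ⟨d, h2⟩ := Fin.ext ((val_eq_iff w h2 B).2 hBv)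
  have hBA : B < A := Fin.lt_def.2 (by omega)
  have hA' : (simpleT n d * w) A = ⟨d, h2⟩ := by
    apply Fin.ext
    rw [Equiv.Perm.mul_apply, wA, simpleT_apply h1 h2]
    simp
  have hB' : (simpleT n d * w) B = ⟨d-1, hd1⟩ := by
    apply Fin.ext
    rw [Equiv.Perm.mul_apply, wB, simpleT_apply h1 h2]
    have : ¬ (d = d - 1) := by omega
    simp [this]
  have hpres : ∀ x : Fin n, x ≠ A → x ≠ B → (simpleT n d * w) x = w x := by
    intro x hxA hxB
    apply Fin.ext
    rw [Equiv.Perm.mul_apply, simpleT_apply h1 h2]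
    have e1 : (w x : ℕ) ≠ d - 1 := fun hc => hxA (Fin.ext (by rw [(val_eq_iff w hd1 x).1 hc, hAv]))
    have e2 : (w x : ℕ) ≠ d := fun hc => hxB (Fin.ext (by rw [(val_eq_iff w h2 x).1 hc, hBv]))
    rw [if_neg e1, if_neg e2]
  constructor
  · -- 321
    rintro ⟨i, j, k, hij, hjk, hkj, hji⟩
    by_cases hboth : (A = i ∨ A = j ∨ A = k) ∧ (B = i ∨ B = j ∨ B = k)
    case neg =>
      have key : ∀ x y : Fin n, (x = i ∨ x = j ∨ x = k) → (y = i ∨ y = j ∨ y = k) →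
          ((simpleT n d * w) x < (simpleT n d * w) y ↔ w x < w y) := by
        intro x y hx hy
        apply mul_lt_pres h1 h2 w x y
        · rintro ⟨hxv, hyv⟩
          exact hboth ⟨by rw [show A = y from Fin.ext (by rw [hAv, hyv])]; exact hy,
                       by rw [show B = x from Fin.ext (by rw [hBv, hxv])]; exact hx⟩
        · rintro ⟨hxv, hyv⟩
          exact hboth ⟨by rw [show A = x from Fin.ext (by rw [hAv, hxv])]; exact hx,
                       by rw [show B = y from Fin.ext (by rw [hBv, hyv])]; exact hy⟩
      exact h3 ⟨i, j, k, hij, hjk, (key k j (by tauto) (by tauto)).1 hkj,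
        (key j i (by tauto) (by tauto)).1 hji⟩
    case pos =>
      obtain ⟨hA, hB⟩ := hboth
      rcases hA with rfl | rfl | rfl <;> rcases hB with hBe | hBe | hBe
      · have := congrArg Fin.val hBe; omega
      · subst hBe; rw [Fin.lt_def] at hij; omega
      · subst hBe; have := (hij.trans hjk); rw [Fin.lt_def] at this; omega
      · subst hBe; rw [hA', hB'] at hji; rw [Fin.lt_def] at hji
        simp only [Fin.val_mk] at hji; omega
      · have := congrArg Fin.val hBe; omega
      · subst hBe; rw [Fin.lt_def] at hjk; omega
      · subst hBe; rw [hA'] at hkj; rw [hB'] at hji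
        rw [Fin.lt_def] at hkj hji; simp only [Fin.val_mk] at hkj hji; omega
      · subst hBe; rw [hA', hB'] at hkj; rw [Fin.lt_def] at hkj
        simp only [Fin.val_mk] at hkj; omega
      · have := congrArg Fin.val hBe; omega
  · -- 3412
    rintro ⟨i, j, k, l, hij, hjk, hkl, p1, p2, p3⟩
    by_cases hboth : (A = i ∨ A = j ∨ A = k ∨ A = l) ∧ (B = i ∨ B = j ∨ B = k ∨ B = l)
    case neg =>
      have key : ∀ x y : Fin n, (x = i ∨ x = j ∨ x = k ∨ x = l) → (y = i ∨ y = j ∨ y = k ∨ y = l) →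
          ((simpleT n d * w) x < (simpleT n d * w) y ↔ w x < w y) := by
        intro x y hx hy
        apply mul_lt_pres h1 h2 w x y
        · rintro ⟨hxv, hyv⟩
          exact hboth ⟨by rw [show A = y from Fin.ext (by rw [hAv, hyv])]; exact hy,
                       by rw [show B = x from Fin.ext (by rw [hBv, hxv])]; exact hx⟩
        · rintro ⟨hxv, hyv⟩
          exact hboth ⟨by rw [show A = x from Fin.ext (by rw [hAv, hxv])]; exact hx,
                       by rw [show B = y from Fin.ext (by rw [hBv, hyv])]; exact hy⟩
      exact h4 ⟨i, j, k, l, hij, hjk, hkl, (key k l (by tauto) (by tauto)).1 p1,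
        (key l i (by tauto) (by tauto)).1 p2, (key i j (by tauto) (by tauto)).1 p3⟩
    case pos =>
      obtain ⟨hA, hB⟩ := hboth
      rcases hA with rfl | rfl | rfl | rfl <;> rcases hB with hBe | hBe | hBe | hBe
      -- A = i
      · have := congrArg Fin.val hBe; omega
      · subst hBe; rw [Fin.lt_def] at hij; omega
      · subst hBe; have := hij.trans hjk; rw [Fin.lt_def] at this; omega
      · subst hBe; have := (hij.trans hjk).trans hkl; rw [Fin.lt_def] at this; omega
      -- A = j
      · -- B = i : 321 in w at (B, A, k)
        subst hBe
        refine absurd ?_ h3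
        refine ⟨B, A, k, hij, hjk, ?_, ?_⟩
        · have hkA : k ≠ A := ne_of_gt hjk
          have hkB : k ≠ B := ne_of_gt (hBA.trans hjk)
          have hlA : l ≠ A := ne_of_gt (hjk.trans hkl)
          have hlB : l ≠ B := ne_of_gt ((hBA.trans hjk).trans hkl)
          rw [hpres k hkA hkB, hpres l hlA hlB] at p1
          rw [hpres l hlA hlB, hB'] at p2
          rw [wA]
          rw [Fin.lt_def] at p1 p2 ⊢
          simp only [Fin.val_mk] at p2 ⊢
          omega
        · rw [wA, wB]; exact Fin.mk_lt_mk.2 (by omega)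
      · have := congrArg Fin.val hBe; omega
      · subst hBe; rw [Fin.lt_def] at hjk; omega
      · subst hBe; have := hjk.trans hkl; rw [Fin.lt_def] at this; omega
      -- A = k
      · subst hBe; rw [hA'] at p1; rw [hB'] at p2
        rw [Fin.lt_def] at p1 p2; simp only [Fin.val_mk] at p1 p2; omega
      · subst hBe; rw [hA'] at p1; rw [hB'] at p3
        rw [Fin.lt_def] at p1 p2 p3; simp only [Fin.val_mk] at p1 p3; omega
      · have := congrArg Fin.val hBe; omega
      · subst hBe; rw [Fin.lt_def] at hkl; omega
      -- A = l
      · subst hBe; rw [hA', hB'] at p2; rw [Fin.lt_def] at p2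
        simp only [Fin.val_mk] at p2; omega
      · subst hBe; rw [hA'] at p2; rw [hB'] at p3
        rw [Fin.lt_def] at p2 p3; simp only [Fin.val_mk] at p2 p3; omega
      · -- B = k : 321 in w at (j, B, A)
        subst hBe
        refine absurd ?_ h3
        refine ⟨j, B, A, hjk, hkl, ?_, ?_⟩
        · rw [wA, wB]; exact Fin.mk_lt_mk.2 (by omega)
        · have hjA : j ≠ A := ne_of_lt (hjk.trans hkl)
          have hjB : j ≠ B := ne_of_lt hjk
          have hiA : i ≠ A := ne_of_lt ((hij.trans hjk).trans hkl)
          have hiB : i ≠ B := ne_of_lt (hij.trans hjk)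
          rw [hpres i hiA hiB, hpres j hjA hjB] at p3
          rw [hpres i hiA hiB, hA'] at p2
          rw [wB]
          rw [Fin.lt_def] at p2 p3 ⊢
          simp only [Fin.val_mk] at p2 ⊢
          omega
      · have := congrArg Fin.val hBe; omega

lemma avoids_mul_of_czero {d : ℕ} (h1 : 1 ≤ d) (h2 : d < n) {w : Equiv.Perm (Fin n)}
    (hz : cstat d w = 0) (h3 : Avoids321 w) (h4 : Avoids3412 w) :
    Avoids321 (simpleT n d * w) ∧ Avoids3412 (simpleT n d * w) := by
  have hd1 : d - 1 < n := by omega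
  have hsplit := cstat_zero_split h2 hz
  obtain ⟨A, B, hAv, hBv⟩ := mkSetup h2 w hd1
  have wA : w A = ⟨d-1, hd1⟩ := Fin.ext ((val_eq_iff w hd1 A).2 hAv)
  have wB : w B = ⟨d, h2⟩ := Fin.ext ((val_eq_iff w h2 B).2 hBv)
  have hAd : (A : ℕ) < d := by
    have := (hsplit A).2 (by rw [wA]; simp only [Fin.val_mk]; omega)
    exact this
  have hBd : d ≤ (B : ℕ) := by
    by_contra hc
    have := (hsplit B).1 (by omega)
    rw [wB] at this; simp only [Fin.val_mk] at this; omega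
  have hAB : A < B := Fin.lt_def.2 (by omega)
  have hA' : (simpleT n d * w) A = ⟨d, h2⟩ := by
    apply Fin.ext
    rw [Equiv.Perm.mul_apply, wA, simpleT_apply h1 h2]
    simp
  have hB' : (simpleT n d * w) B = ⟨d-1, hd1⟩ := by
    apply Fin.ext
    rw [Equiv.Perm.mul_apply, wB, simpleT_apply h1 h2]
    have : ¬ (d = d - 1) := by omega
    simp [this]
  have hpres : ∀ x : Fin n, x ≠ A → x ≠ B → (simpleT n d * w) x = w x := by
    intro x hxA hxB
    apply Fin.ext
    rw [Equiv.Perm.mul_apply, simpleT_apply h1 h2]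
    have e1 : (w x : ℕ) ≠ d - 1 := fun hc => hxA (Fin.ext (by rw [(val_eq_iff w hd1 x).1 hc, hAv]))
    have e2 : (w x : ℕ) ≠ d := fun hc => hxB (Fin.ext (by rw [(val_eq_iff w h2 x).1 hc, hBv]))
    rw [if_neg e1, if_neg e2]
  constructor
  · -- 321
    rintro ⟨i, j, k, hij, hjk, hkj, hji⟩
    by_cases hboth : (A = i ∨ A = j ∨ A = k) ∧ (B = i ∨ B = j ∨ B = k)
    case neg =>
      have key : ∀ x y : Fin n, (x = i ∨ x = j ∨ x = k) → (y = i ∨ y = j ∨ y = k) →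
          ((simpleT n d * w) x < (simpleT n d * w) y ↔ w x < w y) := by
        intro x y hx hy
        apply mul_lt_pres h1 h2 w x y
        · rintro ⟨hxv, hyv⟩
          exact hboth ⟨by rw [show A = y from Fin.ext (by rw [hAv, hyv])]; exact hy,
                       by rw [show B = x from Fin.ext (by rw [hBv, hxv])]; exact hx⟩
        · rintro ⟨hxv, hyv⟩
          exact hboth ⟨by rw [show A = x from Fin.ext (by rw [hAv, hxv])]; exact hx,
                       by rw [show B = y from Fin.ext (by rw [hBv, hyv])]; exact hy⟩
      exact h3 ⟨i, j, k, hij, hjk, (key k j (by tauto) (by tauto)).1 hkj,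
        (key j i (by tauto) (by tauto)).1 hji⟩
    case pos =>
      obtain ⟨hA, hB⟩ := hboth
      rcases hA with rfl | rfl | rfl <;> rcases hB with hBe | hBe | hBe
      · have := congrArg Fin.val hBe; omega
      · -- A = i, B = j : use k beyond B
        subst hBe
        have hkA : k ≠ A := ne_of_gt (hAB.trans hjk)
        have hkB : k ≠ B := ne_of_gt hjk
        rw [hpres k hkA hkB, hB'] at hkj
        rw [Fin.lt_def] at hkj hjk
        simp only [Fin.val_mk] at hkj
        have := (hsplit k).2 (by omega)
        omega
      · -- A = i, B = k : value squeeze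
        subst hBe
        rw [hA'] at hji; rw [hB'] at hkj
        rw [Fin.lt_def] at hkj hji; simp only [Fin.val_mk] at hkj hji; omega
      · -- A = j, B = i : positional
        subst hBe; rw [Fin.lt_def] at hij; omega
      · have := congrArg Fin.val hBe; omega
      · -- A = j, B = k : use i before A
        subst hBe
        have hiA : i ≠ A := ne_of_lt hij
        have hiB : i ≠ B := ne_of_lt (hij.trans hjk)
        rw [hpres i hiA hiB, hA'] at hji
        rw [Fin.lt_def] at hji hij
        simp only [Fin.val_mk] at hji
        have hi : ¬ ((i : ℕ) < d) := by
          intro hc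
          have := (hsplit i).1 hc
          omega
        omega
      · -- A = k, B = i
        subst hBe; have := hij.trans hjk; rw [Fin.lt_def] at this; omega
      · -- A = k, B = j
        subst hBe; rw [Fin.lt_def] at hjk; omega
      · have := congrArg Fin.val hBe; omega
  · -- 3412
    rintro ⟨i, j, k, l, hij, hjk, hkl, p1, p2, p3⟩
    by_cases hboth : (A = i ∨ A = j ∨ A = k ∨ A = l) ∧ (B = i ∨ B = j ∨ B = k ∨ B = l)
    case neg =>
      have key : ∀ x y : Fin n, (x = i ∨ x = j ∨ x = k ∨ x = l) → (y = i ∨ y = j ∨ y = k ∨ y = l) →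
          ((simpleT n d * w) x < (simpleT n d * w) y ↔ w x < w y) := by
        intro x y hx hy
        apply mul_lt_pres h1 h2 w x y
        · rintro ⟨hxv, hyv⟩
          exact hboth ⟨by rw [show A = y from Fin.ext (by rw [hAv, hyv])]; exact hy,
                       by rw [show B = x from Fin.ext (by rw [hBv, hxv])]; exact hx⟩
        · rintro ⟨hxv, hyv⟩
          exact hboth ⟨by rw [show A = x from Fin.ext (by rw [hAv, hxv])]; exact hx,
                       by rw [show B = y from Fin.ext (by rw [hBv, hyv])]; exact hy⟩
      exact h4 ⟨i, j, k, l, hij, hjk, hkl, (key k l (by tauto) (by tauto)).1 p1,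
        (key l i (by tauto) (by tauto)).1 p2, (key i j (by tauto) (by tauto)).1 p3⟩
    case pos =>
      obtain ⟨hA, hB⟩ := hboth
      rcases hA with rfl | rfl | rfl | rfl <;> rcases hB with hBe | hBe | hBe | hBe
      -- A = i
      · have := congrArg Fin.val hBe; omega
      · -- B = j : w' i < w' j gives d < d-1
        subst hBe; rw [hA', hB'] at p3; rw [Fin.lt_def] at p3
        simp only [Fin.val_mk] at p3; omega
      · -- B = k : squeeze
        subst hBe; rw [hA'] at p2; rw [hB'] at p1
        rw [Fin.lt_def] at p1 p2; simp only [Fin.val_mk] at p1 p2; omega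
      · -- B = l : the real case, use hsplit on j and k
        subst hBe
        have hjA : j ≠ A := ne_of_gt hij
        have hjB : j ≠ B := ne_of_lt (hjk.trans hkl)
        have hkA : k ≠ A := ne_of_gt (hij.trans hjk)
        have hkB : k ≠ B := ne_of_lt hkl
        rw [hpres j hjA hjB, hA'] at p3
        rw [hpres k hkA hkB, hB'] at p1
        rw [Fin.lt_def] at p1 p3 hjk
        simp only [Fin.val_mk] at p1 p3
        have hjge : ¬ ((j : ℕ) < d) := by
          intro hc
          have := (hsplit j).1 hc
          omega
        have hklt : (k : ℕ) < d := (hsplit k).2 (by omega)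
        omega
      -- A = j
      · subst hBe; rw [Fin.lt_def] at hij; omega
      · have := congrArg Fin.val hBe; omega
      · -- B = k : squeeze
        subst hBe; rw [hA'] at p3; rw [hB'] at p1
        rw [Fin.lt_def] at p1 p2 p3; simp only [Fin.val_mk] at p1 p3; omega
      · -- B = l : squeeze
        subst hBe; rw [hA'] at p3; rw [hB'] at p2
        rw [Fin.lt_def] at p2 p3; simp only [Fin.val_mk] at p2 p3; omega
      -- A = k
      · subst hBe; have := hij.trans hjk; rw [Fin.lt_def] at this; omega
      · subst hBe; rw [Fin.lt_def] at hjk; omega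
      · have := congrArg Fin.val hBe; omega
      · -- B = l : w' k < w' l gives d < d-1
        subst hBe; rw [hA', hB'] at p1; rw [Fin.lt_def] at p1
        simp only [Fin.val_mk] at p1; omega
      -- A = l
      · subst hBe; have := (hij.trans hjk).trans hkl; rw [Fin.lt_def] at this; omega
      · subst hBe; have := hjk.trans hkl; rw [Fin.lt_def] at this; omega
      · subst hBe; rw [Fin.lt_def] at hkl; omega
      · have := congrArg Fin.val hBe; omega


lemma exists_word (m : ℕ) : ∀ w : Equiv.Perm (Fin n), invNum w = m → Avoids321 w → Avoids3412 w →
    ∃ l : List ℕ, (∀ j ∈ l, 1 ≤ j ∧ j < n) ∧ (l.map (simpleT n)).prod = w ∧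
      l.length = m ∧ l.Nodup ∧ (∀ i ∈ l, 0 < cstat i w) := by
  induction m using Nat.strong_induction_on with
  | _ m IH =>
    intro w hm h3 h4
    by_cases hD : ∃ e, 1 ≤ e ∧ e < n ∧ pw w e < pw w (e-1)
    · set D : Set ℕ := {e | 1 ≤ e ∧ e < n ∧ pw w e < pw w (e-1)} with hDdef
      have hDne : D.Nonempty := hD
      obtain ⟨hd1, hd2, hdesc⟩ : 1 ≤ sInf D ∧ sInf D < n ∧ pw w (sInf D) < pw w (sInf D - 1) :=
        Nat.sInf_mem hDne
      set d := sInf D with hddef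
      have hmin : ∀ e, 1 ≤ e → e < d → pw w (e-1) < pw w e := by
        intro e he1 hed
        have hnm : e ∉ D := Nat.notMem_of_lt_sInf hed
        simp only [hDdef, Set.mem_setOf_eq, not_and, not_lt] at hnm
        have hle := hnm he1 (by omega)
        have hne : pw w (e-1) ≠ pw w e := by
          intro hc
          have := pw_inj w (by omega : e - 1 < n) (by omega : e < n) hc
          omega
        omega
      have hdec := invNum_desc hd1 hd2 w hdesc
      obtain ⟨ha3, ha4⟩ := avoids_mul_of_desc hd1 hd2 hdesc h3 h4
      have hm' : invNum (simpleT n d * w) = m - 1 := by omega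
      have hmlt : m - 1 < m := by omega
      obtain ⟨l', hval', hprod', hlen', hnodup', hcs'⟩ :=
        IH (m-1) hmlt (simpleT n d * w) hm' ha3 ha4
      have hcz := cstat_zero_of_min_desc hd1 hd2 w hdesc hmin h3 h4
      have hdninl : d ∉ l' := by
        intro hdin
        have := hcs' d hdin
        omega
      refine ⟨d :: l', ?_, ?_, ?_, ?_, ?_⟩
      · intro j hj
        rcases List.mem_cons.1 hj with rfl | hj'
        · exact ⟨hd1, hd2⟩
        · exact hval' j hj'
      · rw [List.map_cons, List.prod_cons, hprod', ← mul_assoc, simpleT_mul_self, one_mul]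
      · simp [hlen']; omega
      · exact List.nodup_cons.2 ⟨hdninl, hnodup'⟩
      · intro i hi
        rcases List.mem_cons.1 hi with rfl | hi'
        · exact cstat_pos_of_desc hd1 hd2 w hdesc
        · have hine : i ≠ d := fun hc => hdninl (hc ▸ hi')
          have := hcs' i hi'
          rw [cstat_mul hd1 hd2 hine w] at this
          exact this
    · push_neg at hD
      have hw1 : w = 1 := eq_one_of_no_desc (fun e he1 he2 => by
        intro hc
        exact absurd hc (by simpa using hD e he1 he2))
      subst hw1
      have : m = 0 := by rw [← hm, invNum_one]
      subst this
      exact ⟨[], by simp, by simp, by simp, by simp, by simp⟩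

lemma avoids_of_nodup (l : List ℕ) (hnd : l.Nodup) (hv : ∀ j ∈ l, 1 ≤ j ∧ j < n) :
    Avoids321 ((l.map (simpleT n)).prod) ∧ Avoids3412 ((l.map (simpleT n)).prod) := by
  induction l with
  | nil =>
    constructor
    · rintro ⟨i, j, k, hij, hjk, hkj, hji⟩
      simp only [List.map_nil, List.prod_nil, Equiv.Perm.one_apply] at hkj hji
      exact absurd hjk (asymm hkj)
    · rintro ⟨i, j, k, l, hij, hjk, hkl, p1, p2, p3⟩
      simp only [List.map_nil, List.prod_nil, Equiv.Perm.one_apply] at p1 p2 p3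
      have h5 := hij.trans (hjk.trans hkl)
      exact absurd h5 (asymm p2)
  | cons d l' ih =>
    have hd := hv d (by simp)
    obtain ⟨hdn, hnd'⟩ := List.nodup_cons.1 hnd
    obtain ⟨h3, h4⟩ := ih hnd' (fun j hj => hv j (List.mem_cons_of_mem _ hj))
    have hcz : cstat d ((l'.map (simpleT n)).prod) = 0 :=
      word_cstat (fun j hj => hv j (List.mem_cons_of_mem _ hj)) hdn
    have := avoids_mul_of_czero hd.1 hd.2 hcz h3 h4
    rw [List.map_cons, List.prod_cons]
    exact this

theorem stmt6' (n : ℕ) (w : Equiv.Perm (Fin n)) :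
    (∃ l, IsReducedWord n w l ∧ l.Nodup) ↔ (Avoids321 w ∧ Avoids3412 w) := by
  constructor
  · rintro ⟨l, ⟨⟨hval, hprod⟩, _⟩, hnodup⟩
    have := avoids_of_nodup l hnodup hval
    rw [hprod] at this
    exact this
  · rintro ⟨h3, h4⟩
    obtain ⟨l, hval, hprod, hlen, hnodup, -⟩ := exists_word (invNum w) w rfl h3 h4
    have hmem : invNum w ∈ {k | ∃ l, IsWord n w l ∧ l.length = k} :=
      ⟨l, ⟨hval, hprod⟩, hlen⟩
    have hcox : coxLength n w = invNum w := by
      apply le_antisymm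
      · exact Nat.sInf_le hmem
      · obtain ⟨l₀, hl₀, hlen₀⟩ := Nat.sInf_mem (⟨_, hmem⟩ : Set.Nonempty _)
        rw [coxLength, ← hlen₀]
        have := invNum_word_le hl₀.1
        rw [hl₀.2] at this
        exact this
    exact ⟨l, ⟨⟨hval, hprod⟩, by rw [hlen, hcox]⟩, hnodup⟩


end Stmt6Aux

theorem stmt6 (n : ℕ) (w : Equiv.Perm (Fin n)) :
    (∃ l, IsReducedWord n w l ∧ l.Nodup) ↔ (Avoids321 w ∧ Avoids3412 w) :=
  Stmt6Aux.stmt6' n w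
end

section
/- A permutation w avoids the pattern 321 if and only if no reduced word of w contains a factor of the form i(i+1)i. -/
def invSet (n : ℕ) (w : Equiv.Perm (Fin n)) : Finset (Fin n × Fin n) :=
  Finset.univ.filter (fun p => p.1 < p.2 ∧ w p.2 < w p.1)

def invNum (n : ℕ) (w : Equiv.Perm (Fin n)) : ℕ := (invSet n w).card

lemma mem_invSet {n : ℕ} {w : Equiv.Perm (Fin n)} {p : Fin n × Fin n} :
    p ∈ invSet n w ↔ p.1 < p.2 ∧ w p.2 < w p.1 := by
  simp [invSet]

lemma swap_adj {n : ℕ} {a b x y : Fin n} (hab : (a : ℕ) + 1 = (b : ℕ))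
    (hxy : x < y) (hne : ¬(x = a ∧ y = b)) :
    Equiv.swap a b x < Equiv.swap a b y := by
  have hxy' : (x : ℕ) < (y : ℕ) := hxy
  rcases eq_or_ne x a with rfl | hxa
  · have hyb : y ≠ b := fun h => hne ⟨rfl, h⟩
    have hya : y ≠ x := hxy.ne'
    rw [Equiv.swap_apply_left, Equiv.swap_apply_of_ne_of_ne hya hyb]
    have : (y : ℕ) ≠ (b : ℕ) := fun h => hyb (Fin.ext h)
    exact Fin.lt_def.mpr (by omega)
  · rcases eq_or_ne x b with rfl | hxb
    · have hya : y ≠ a := by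
        intro h; subst h; omega
      have hyb : y ≠ x := hxy.ne'
      rw [Equiv.swap_apply_right, Equiv.swap_apply_of_ne_of_ne hya hyb]
      exact Fin.lt_def.mpr (by omega)
    · rcases eq_or_ne y a with rfl | hya
      · rw [Equiv.swap_apply_left, Equiv.swap_apply_of_ne_of_ne hxa hxb]
        exact Fin.lt_def.mpr (by omega)
      · rcases eq_or_ne y b with rfl | hyb
        · rw [Equiv.swap_apply_right, Equiv.swap_apply_of_ne_of_ne hxa hxb]
          have h1 : (x : ℕ) ≠ (a : ℕ) := fun h => hxa (Fin.ext h)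
          exact Fin.lt_def.mpr (by omega)
        · rw [Equiv.swap_apply_of_ne_of_ne hxa hxb, Equiv.swap_apply_of_ne_of_ne hya hyb]
          exact hxy

lemma simpleT_eq {n i : ℕ} (h1 : 1 ≤ i) (h2 : i < n) :
    simpleT n i = Equiv.swap ⟨i - 1, by omega⟩ ⟨i, h2⟩ := by
  rw [simpleT, dif_pos ⟨h1, h2⟩]

lemma simpleT_sq (n i : ℕ) : simpleT n i * simpleT n i = 1 := by
  by_cases h : 1 ≤ i ∧ i < n
  · rw [simpleT, dif_pos h, Equiv.swap_mul_self]
  · rw [simpleT, dif_neg h, one_mul]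

lemma simpleT_inv (n i : ℕ) : (simpleT n i)⁻¹ = simpleT n i :=
  inv_eq_of_mul_eq_one_right (simpleT_sq n i)

lemma invNum_mul_of_lt {n : ℕ} {i : ℕ} (h1 : 1 ≤ i) (h2 : i < n) (w : Equiv.Perm (Fin n))
    (hw : w ⟨i - 1, by omega⟩ < w ⟨i, h2⟩) :
    invNum n (w * simpleT n i) = invNum n w + 1 := by
  have hs := simpleT_eq h1 h2
  rw [invNum, invNum, hs]
  generalize ha' : (⟨i - 1, by omega⟩ : Fin n) = a at *
  generalize hb' : (⟨i, h2⟩ : Fin n) = b at *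
  have hab : (a : ℕ) + 1 = (b : ℕ) := by
    subst ha' hb'; simp; omega
  have haltb : a < b := Fin.lt_def.mpr (by omega)
  have hself : ∀ x : Fin n, Equiv.swap a b (Equiv.swap a b x) = x :=
    fun x => Equiv.swap_apply_self a b x
  have hmem : (a, b) ∈ invSet n (w * Equiv.swap a b) := by
    rw [mem_invSet]
    refine ⟨haltb, ?_⟩
    simp only [Equiv.Perm.mul_apply, Equiv.swap_apply_right, Equiv.swap_apply_left]
    exact hw
  have hnmem : (a, b) ∉ invSet n w := by
    rw [mem_invSet]
    rintro ⟨-, h⟩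
    exact absurd hw (not_lt.mpr h.le)
  have hcard : ((invSet n (w * Equiv.swap a b)).erase (a, b)).card
      = ((invSet n w).erase (a, b)).card := by
    apply Finset.card_bij' (fun p _ => (Equiv.swap a b p.1, Equiv.swap a b p.2))
      (fun p _ => (Equiv.swap a b p.1, Equiv.swap a b p.2))
    · intro p hp
      rw [Finset.mem_erase, mem_invSet] at hp ⊢
      obtain ⟨hpne, hplt, hpv⟩ := hp
      have hne : ¬(p.1 = a ∧ p.2 = b) := by
        rintro ⟨e1, e2⟩; exact hpne (by rw [← e1, ← e2])
      refine ⟨?_, swap_adj hab hplt hne, ?_⟩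
      · rintro h
        have e1 : Equiv.swap a b p.1 = a := congrArg Prod.fst h
        have e2 : Equiv.swap a b p.2 = b := congrArg Prod.snd h
        have f1 : p.1 = b := by
          have := congrArg (Equiv.swap a b) e1
          rwa [hself, Equiv.swap_apply_left] at this
        have f2 : p.2 = a := by
          have := congrArg (Equiv.swap a b) e2
          rwa [hself, Equiv.swap_apply_right] at this
        rw [f1, f2] at hplt
        exact absurd hplt (not_lt.mpr haltb.le)
      · simpa only [Equiv.Perm.mul_apply] using hpv
    · intro p hp
      rw [Finset.mem_erase, mem_invSet] at hp ⊢
      obtain ⟨hpne, hplt, hpv⟩ := hp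
      have hne : ¬(p.1 = a ∧ p.2 = b) := by
        rintro ⟨e1, e2⟩; exact hpne (by rw [← e1, ← e2])
      refine ⟨?_, swap_adj hab hplt hne, ?_⟩
      · rintro h
        have e1 : Equiv.swap a b p.1 = a := congrArg Prod.fst h
        have e2 : Equiv.swap a b p.2 = b := congrArg Prod.snd h
        have f1 : p.1 = b := by
          have := congrArg (Equiv.swap a b) e1
          rwa [hself, Equiv.swap_apply_left] at this
        have f2 : p.2 = a := by
          have := congrArg (Equiv.swap a b) e2
          rwa [hself, Equiv.swap_apply_right] at this
        rw [f1, f2] at hplt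
        exact absurd hplt (not_lt.mpr haltb.le)
      · simp only [Equiv.Perm.mul_apply, hself]
        exact hpv
    · intro p hp; simp [hself]
    · intro p hp; simp [hself]
  have e1 : ((invSet n (w * Equiv.swap a b)).erase (a, b)).card + 1
      = (invSet n (w * Equiv.swap a b)).card := Finset.card_erase_add_one hmem
  have e2 : (invSet n w).erase (a, b) = invSet n w := Finset.erase_eq_of_notMem hnmem
  rw [← e1, hcard, e2]

lemma invNum_mul_of_gt {n : ℕ} {i : ℕ} (h1 : 1 ≤ i) (h2 : i < n) (w : Equiv.Perm (Fin n))
    (hw : w ⟨i, h2⟩ < w ⟨i - 1, by omega⟩) :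
    invNum n (w * simpleT n i) + 1 = invNum n w := by
  have hs := simpleT_eq h1 h2
  have key := invNum_mul_of_lt h1 h2 (w * simpleT n i) (by
    simp only [Equiv.Perm.mul_apply, hs, Equiv.swap_apply_left, Equiv.swap_apply_right]
    exact hw)
  rw [mul_assoc, simpleT_sq, mul_one] at key
  omega

lemma invNum_one (n : ℕ) : invNum n (1 : Equiv.Perm (Fin n)) = 0 := by
  rw [invNum, Finset.card_eq_zero]
  ext p
  simp only [mem_invSet, Equiv.Perm.one_apply, Finset.notMem_empty, iff_false]
  rintro ⟨h1, h2⟩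
  exact absurd h2 (not_lt.mpr h1.le)

lemma invNum_mul_le {n : ℕ} (w : Equiv.Perm (Fin n)) (i : ℕ) :
    invNum n (w * simpleT n i) ≤ invNum n w + 1 := by
  by_cases h : 1 ≤ i ∧ i < n
  · obtain ⟨h1, h2⟩ := h
    rcases lt_trichotomy (w ⟨i - 1, by omega⟩) (w ⟨i, h2⟩) with hlt | heq | hgt
    · exact (invNum_mul_of_lt h1 h2 w hlt).le
    · exact absurd (w.injective heq) (by intro h; have := congrArg Fin.val h; simp at this; omega)
    · have := invNum_mul_of_gt h1 h2 w hgt; omega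
  · rw [simpleT, dif_neg h, mul_one]; omega

lemma invNum_prod_le {n : ℕ} : ∀ (l : List ℕ) (g : Equiv.Perm (Fin n)),
    invNum n (g * (l.map (simpleT n)).prod) ≤ invNum n g + l.length
  | [], g => by simp
  | j :: l, g => by
    have h1 := invNum_prod_le l (g * simpleT n j)
    have h2 := invNum_mul_le g j
    simp only [List.map_cons, List.prod_cons, List.length_cons, ← mul_assoc]
    omega

lemma invNum_word_le {n : ℕ} (l : List ℕ) :
    invNum n ((l.map (simpleT n)).prod) ≤ l.length := by
  have := invNum_prod_le l (1 : Equiv.Perm (Fin n))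
  rwa [one_mul, invNum_one, zero_add] at this

lemma invNum_inv {n : ℕ} (w : Equiv.Perm (Fin n)) : invNum n w⁻¹ = invNum n w := by
  rw [invNum, invNum]
  apply Finset.card_bij' (fun p _ => (w⁻¹ p.2, w⁻¹ p.1)) (fun p _ => (w p.2, w p.1))
  · intro p hp
    rw [mem_invSet] at hp ⊢
    exact ⟨hp.2, by simp [hp.1]⟩
  · intro p hp
    rw [mem_invSet] at hp ⊢
    exact ⟨hp.2, by simp [hp.1]⟩
  · intro p hp; simp
  · intro p hp; simp

lemma descent_aux {n : ℕ} (w : Equiv.Perm (Fin n)) :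
    ∀ (k p : ℕ) (h : p + k < n), w ⟨p + k, h⟩ < w ⟨p, by omega⟩ →
    ∃ d, p ≤ d ∧ d + 1 ≤ p + k ∧ ∃ hd : d + 1 < n, w ⟨d + 1, hd⟩ < w ⟨d, by omega⟩
  | 0, p, h, hw => absurd hw (lt_irrefl _)
  | (k+1), p, h, hw => by
    by_cases hmq : w ⟨p + (k+1), h⟩ < w ⟨p + k, by omega⟩
    · exact ⟨p + k, by omega, by omega, by omega, by
        convert hmq using 3 <;> omega⟩
    · have hle : w ⟨p + k, by omega⟩ < w ⟨p, by omega⟩ :=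
        lt_of_le_of_lt (not_lt.mp hmq) hw
      obtain ⟨d, hd1, hd2, hd3, hd4⟩ := descent_aux w k p (by omega) hle
      exact ⟨d, hd1, by omega, hd3, hd4⟩

lemma mono_le_apply {n : ℕ} (w : Equiv.Perm (Fin n))
    (hmono : ∀ x y : Fin n, x < y → w x < w y) :
    ∀ (m : ℕ) (hm : m < n), m ≤ (w ⟨m, hm⟩ : ℕ) := by
  intro m
  induction m with
  | zero => intro _; omega
  | succ k ih =>
    intro hm
    have h1 := ih (by omega)
    have h2 : w ⟨k, by omega⟩ < w ⟨k+1, hm⟩ := hmono _ _ (Fin.lt_def.mpr (by simp))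
    have := Fin.lt_def.mp h2
    omega

lemma eq_one_of_mono {n : ℕ} (w : Equiv.Perm (Fin n))
    (hmono : ∀ x y : Fin n, x < y → w x < w y) : w = 1 := by
  have hmono' : ∀ x y : Fin n, x < y → w⁻¹ x < w⁻¹ y := by
    intro x y hxy
    rcases lt_trichotomy (w⁻¹ x) (w⁻¹ y) with h | h | h
    · exact h
    · exact absurd (congrArg w h) (by simp [hxy.ne])
    · have := hmono _ _ h
      simp only [Equiv.Perm.coe_inv, Equiv.apply_symm_apply] at this
      exact absurd hxy (not_lt.mpr this.le)
  apply Equiv.ext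
  intro x
  have h1 : (x : ℕ) ≤ (w x : ℕ) := by
    have := mono_le_apply w hmono x.1 x.2
    simpa using this
  have h2 : (w x : ℕ) ≤ (x : ℕ) := by
    have := mono_le_apply w⁻¹ hmono' (w x).1 (w x).2
    simp only [Fin.eta, Equiv.Perm.coe_inv, Equiv.symm_apply_apply] at this
    omega
  simp only [Equiv.Perm.one_apply]
  exact Fin.ext (by omega)

lemma invNum_zero_eq_one {n : ℕ} (w : Equiv.Perm (Fin n)) (h0 : invNum n w = 0) : w = 1 := by
  rw [invNum, Finset.card_eq_zero] at h0
  apply eq_one_of_mono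
  intro x y hxy
  by_contra hc
  have hne : w x ≠ w y := fun h => absurd (w.injective h) hxy.ne
  have : (x, y) ∈ invSet n w := mem_invSet.mpr ⟨hxy, lt_of_le_of_ne (not_lt.mp hc) (Ne.symm hne)⟩
  rw [h0] at this
  exact absurd this (Finset.notMem_empty _)

lemma exists_word_invNum {n : ℕ} :
    ∀ (N : ℕ) (w : Equiv.Perm (Fin n)), invNum n w ≤ N →
    ∃ l : List ℕ, (∀ i ∈ l, 1 ≤ i ∧ i < n) ∧ (l.map (simpleT n)).prod = w ∧
      l.length = invNum n w := by
  intro N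
  induction N with
  | zero =>
    intro w hw
    have h0 : invNum n w = 0 := by omega
    rw [invNum_zero_eq_one w h0]
    exact ⟨[], by simp, by simp, by simp [h0, invNum_one]⟩
  | succ N ih =>
    intro w hw
    by_cases h0 : invNum n w = 0
    · rw [invNum_zero_eq_one w h0]
      exact ⟨[], by simp, by simp, by simp [h0, invNum_one]⟩
    · have hne : invSet n w ≠ ∅ := by
        intro h; rw [invNum, h] at h0; simp at h0
      obtain ⟨p, hp⟩ := Finset.nonempty_iff_ne_empty.mpr hne
      rw [mem_invSet] at hp
      obtain ⟨hplt, hpv⟩ := hp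
      have hval : (p.1 : ℕ) + ((p.2 : ℕ) - (p.1 : ℕ)) < n := by
        have := p.2.2; have := Fin.lt_def.mp hplt; omega
      have hw' : w ⟨(p.1 : ℕ) + ((p.2 : ℕ) - (p.1 : ℕ)), hval⟩ < w ⟨(p.1 : ℕ), by omega⟩ := by
        have e1 : (⟨(p.1 : ℕ) + ((p.2 : ℕ) - (p.1 : ℕ)), hval⟩ : Fin n) = p.2 :=
          Fin.ext (by have := Fin.lt_def.mp hplt; simp; omega)
        have e2 : (⟨(p.1 : ℕ), by omega⟩ : Fin n) = p.1 := Fin.ext rfl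
        rw [e1, e2]; exact hpv
      obtain ⟨d, hd1, hd2, hd3, hdesc⟩ := descent_aux w _ _ hval hw'
      have hkey : invNum n (w * simpleT n (d+1)) + 1 = invNum n w := by
        apply invNum_mul_of_gt (by omega) hd3
        have e : (⟨d + 1 - 1, by omega⟩ : Fin n) = (⟨d, by omega⟩ : Fin n) := Fin.ext (by simp)
        rw [e]; exact hdesc
      obtain ⟨l, hl1, hl2, hl3⟩ := ih (w * simpleT n (d+1)) (by omega)
      refine ⟨l ++ [d+1], ?_, ?_, ?_⟩
      · intro j hj
        rcases List.mem_append.mp hj with h | h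
        · exact hl1 j h
        · simp at h; omega
      · rw [List.map_append, List.prod_append, hl2]
        simp [mul_assoc, simpleT_sq]
      · simp [hl3]; omega

lemma coxLength_eq (n : ℕ) (w : Equiv.Perm (Fin n)) : coxLength n w = invNum n w := by
  have hmem : invNum n w ∈ {k | ∃ l, IsWord n w l ∧ l.length = k} := by
    obtain ⟨l, h1, h2, h3⟩ := exists_word_invNum (invNum n w) w le_rfl
    exact ⟨l, ⟨h1, h2⟩, h3⟩
  refine le_antisymm (Nat.sInf_le hmem) (le_csInf ⟨_, hmem⟩ ?_)
  rintro k ⟨l, ⟨hval, hprod⟩, rfl⟩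
  rw [← hprod]
  exact invNum_word_le l

lemma isReducedWord_iff {n : ℕ} {w : Equiv.Perm (Fin n)} {l : List ℕ} :
    IsReducedWord n w l ↔ IsWord n w l ∧ l.length = invNum n w := by
  rw [IsReducedWord, coxLength_eq]

lemma reduced_split {n : ℕ} (l₁ l₂ : List ℕ)
    (hlen : (l₁ ++ l₂).length = invNum n (((l₁ ++ l₂).map (simpleT n)).prod)) :
    invNum n ((l₁.map (simpleT n)).prod) = l₁.length ∧
    invNum n ((l₂.map (simpleT n)).prod) = l₂.length ∧
    invNum n (((l₁ ++ l₂).map (simpleT n)).prod)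
      = invNum n ((l₁.map (simpleT n)).prod) + l₂.length := by
  have hsplit : ((l₁ ++ l₂).map (simpleT n)).prod
      = (l₁.map (simpleT n)).prod * (l₂.map (simpleT n)).prod := by
    rw [List.map_append, List.prod_append]
  have h1 : invNum n ((l₁.map (simpleT n)).prod) ≤ l₁.length := invNum_word_le l₁
  have h4 : invNum n ((l₂.map (simpleT n)).prod) ≤ l₂.length := invNum_word_le l₂
  have h2 : invNum n (((l₁ ++ l₂).map (simpleT n)).prod)
      ≤ invNum n ((l₁.map (simpleT n)).prod) + l₂.length := by
    rw [hsplit]; exact invNum_prod_le l₂ _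
  obtain ⟨m, hm1, hm2, hm3⟩ :=
    exists_word_invNum (n := n) (invNum n ((l₂.map (simpleT n)).prod)) _ le_rfl
  have h3 : invNum n (((l₁ ++ l₂).map (simpleT n)).prod)
      ≤ l₁.length + invNum n ((l₂.map (simpleT n)).prod) := by
    have : ((l₁ ++ l₂).map (simpleT n)).prod = ((l₁ ++ m).map (simpleT n)).prod := by
      rw [hsplit, List.map_append, List.prod_append, hm2]
    rw [this]
    have := invNum_word_le (n := n) (l₁ ++ m)
    simp only [List.length_append] at this
    omega
  simp only [List.length_append] at hlen
  omega

lemma ascent_of_invNum_succ {n j : ℕ} (h1 : 1 ≤ j) (h2 : j < n) (g : Equiv.Perm (Fin n))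
    (h : invNum n (g * simpleT n j) = invNum n g + 1) :
    g ⟨j - 1, by omega⟩ < g ⟨j, h2⟩ := by
  rcases lt_trichotomy (g ⟨j - 1, by omega⟩) (g ⟨j, h2⟩) with hlt | heq | hgt
  · exact hlt
  · exact absurd (g.injective heq)
      (by intro hh; have := congrArg Fin.val hh; simp at this; omega)
  · have := invNum_mul_of_gt h1 h2 g hgt; omega

lemma ascent_of_invNum_succ_left {n j : ℕ} (h1 : 1 ≤ j) (h2 : j < n) (g : Equiv.Perm (Fin n))
    (h : invNum n (simpleT n j * g) = invNum n g + 1) :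
    g⁻¹ ⟨j - 1, by omega⟩ < g⁻¹ ⟨j, h2⟩ := by
  apply ascent_of_invNum_succ h1 h2 g⁻¹
  have e : g⁻¹ * simpleT n j = (simpleT n j * g)⁻¹ := by
    rw [mul_inv_rev, simpleT_inv]
  rw [e, invNum_inv, h, invNum_inv]

lemma braid_factor_pattern {n : ℕ} {l₁ l₂ : List ℕ} {i : ℕ} {w : Equiv.Perm (Fin n)}
    (hred : IsReducedWord n w (l₁ ++ [i, i + 1, i] ++ l₂)) :
    ∃ p q r : Fin n, p < q ∧ q < r ∧ w r < w q ∧ w q < w p := by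
  obtain ⟨⟨hval, hprod⟩, hlen⟩ := isReducedWord_iff.mp hred
  have hi1 : 1 ≤ i ∧ i < n := hval i (by simp)
  have hi3 : i + 1 < n := (hval (i+1) (by simp)).2
  obtain ⟨hi1, hi2⟩ := hi1
  -- the three Fin points
  set a : Fin n := ⟨i - 1, by omega⟩ with hadef
  set b : Fin n := ⟨i, hi2⟩ with hbdef
  set c : Fin n := ⟨i + 1, hi3⟩ with hcdef
  have hsi : simpleT n i = Equiv.swap a b := simpleT_eq hi1 hi2
  have hsi1 : simpleT n (i+1) = Equiv.swap b c := by
    rw [simpleT_eq (by omega) hi3]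
    congr 1 <;> exact Fin.ext (by simp)
  have hab : a ≠ b := by simp [hadef, hbdef, Fin.ext_iff] <;> omega
  have hac : a ≠ c := by simp [hadef, hcdef, Fin.ext_iff] <;> omega
  have hbc : b ≠ c := by simp [hbdef, hcdef, Fin.ext_iff] <;> omega
  have sia : simpleT n i a = b := by rw [hsi]; exact Equiv.swap_apply_left a b
  have sib : simpleT n i b = a := by rw [hsi]; exact Equiv.swap_apply_right a b
  have sic : simpleT n i c = c := by rw [hsi]; exact Equiv.swap_apply_of_ne_of_ne hac.symm hbc.symm
  have si1a : simpleT n (i+1) a = a := by rw [hsi1]; exact Equiv.swap_apply_of_ne_of_ne hab hac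
  have si1b : simpleT n (i+1) b = c := by rw [hsi1]; exact Equiv.swap_apply_left b c
  have si1c : simpleT n (i+1) c = b := by rw [hsi1]; exact Equiv.swap_apply_right b c
  -- abbreviations
  have key : ∀ x y : List ℕ, x ++ y = l₁ ++ [i, i + 1, i] ++ l₂ →
      invNum n ((x.map (simpleT n)).prod) = x.length ∧
      invNum n ((y.map (simpleT n)).prod) = y.length := by
    intro x y hxy
    have hlen' : (x ++ y).length = invNum n (((x ++ y).map (simpleT n)).prod) := by
      rw [hxy, hprod, ← hlen]
    obtain ⟨h1, h2, h3⟩ := reduced_split x y hlen'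
    exact ⟨h1, h2⟩
  have A0 := key l₁ ([i, i+1, i] ++ l₂) (by simp)
  have A1 := key (l₁ ++ [i]) ([i+1, i] ++ l₂) (by simp)
  have A2 := key (l₁ ++ [i, i+1]) ([i] ++ l₂) (by simp)
  have A3 := key (l₁ ++ [i, i+1, i]) l₂ (by simp)
  -- product normalizations
  have P1 : (((l₁ ++ [i]).map (simpleT n)).prod)
      = (l₁.map (simpleT n)).prod * simpleT n i := by
    simp
  have P2 : (((l₁ ++ [i, i+1]).map (simpleT n)).prod)
      = (l₁.map (simpleT n)).prod * simpleT n i * simpleT n (i+1) := by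
    simp [mul_assoc]
  have P3 : (((l₁ ++ [i, i+1, i]).map (simpleT n)).prod)
      = (l₁.map (simpleT n)).prod * simpleT n i * simpleT n (i+1) * simpleT n i := by
    simp [mul_assoc]
  have Q1 : ((([i] ++ l₂).map (simpleT n)).prod)
      = simpleT n i * (l₂.map (simpleT n)).prod := by simp
  have Q2 : ((([i+1, i] ++ l₂).map (simpleT n)).prod)
      = simpleT n (i+1) * (simpleT n i * (l₂.map (simpleT n)).prod) := by
    simp [mul_assoc]
  have Q3 : ((([i, i+1, i] ++ l₂).map (simpleT n)).prod)
      = simpleT n i * (simpleT n (i+1) * (simpleT n i * (l₂.map (simpleT n)).prod)) := by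
    simp [mul_assoc]
  set u := (l₁.map (simpleT n)).prod with hu
  set v := (l₂.map (simpleT n)).prod with hv
  -- u-side ascents
  have lenA : (l₁ ++ [i]).length = l₁.length + 1 := by simp
  have D1 : u a < u b := by
    have h := A1.1
    rw [P1] at h
    have := ascent_of_invNum_succ hi1 hi2 u (by rw [h, A0.1, lenA])
    exact this
  have D3 : u b < u c := by
    have h2 := A2.1
    rw [P2] at h2
    have h3 := A3.1
    rw [P3] at h3
    have step : invNum n ((u * simpleT n i * simpleT n (i+1)) * simpleT n i)
        = invNum n (u * simpleT n i * simpleT n (i+1)) + 1 := by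
      rw [h2, h3]; simp
    have has := ascent_of_invNum_succ hi1 hi2 _ step
    have e1 : (u * simpleT n i * simpleT n (i+1)) a = u b := by
      simp only [Equiv.Perm.mul_apply, si1a, sia]
    have e2 : (u * simpleT n i * simpleT n (i+1)) b = u c := by
      simp only [Equiv.Perm.mul_apply, si1b, sic]
    rw [show (⟨i - 1, by omega⟩ : Fin n) = a from rfl, show (⟨i, hi2⟩ : Fin n) = b from rfl,
      e1, e2] at has
    exact has
  -- v-side ascents
  have L1 : v⁻¹ a < v⁻¹ b := by
    have h2 := A2.2
    rw [Q1] at h2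
    have h3 := A3.2
    have step : invNum n (simpleT n i * v) = invNum n v + 1 := by
      rw [h2, h3]; simp
    exact ascent_of_invNum_succ_left hi1 hi2 v step
  have L3 : v⁻¹ b < v⁻¹ c := by
    have h0 := A0.2
    rw [Q3] at h0
    have h1 := A1.2
    rw [Q2] at h1
    have step : invNum n (simpleT n i * (simpleT n (i+1) * (simpleT n i * v)))
        = invNum n (simpleT n (i+1) * (simpleT n i * v)) + 1 := by
      rw [h0, h1]; simp
    have has := ascent_of_invNum_succ_left hi1 hi2 _ step
    have einv : (simpleT n (i+1) * (simpleT n i * v))⁻¹ = v⁻¹ * simpleT n i * simpleT n (i+1) := by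
      rw [mul_inv_rev, mul_inv_rev, simpleT_inv, simpleT_inv, mul_assoc]
    rw [einv] at has
    have e1 : (v⁻¹ * simpleT n i * simpleT n (i+1)) a = v⁻¹ b := by
      simp only [Equiv.Perm.mul_apply, si1a, sia]
    have e2 : (v⁻¹ * simpleT n i * simpleT n (i+1)) b = v⁻¹ c := by
      simp only [Equiv.Perm.mul_apply, si1b, sic]
    rw [show (⟨i - 1, by omega⟩ : Fin n) = a from rfl, show (⟨i, hi2⟩ : Fin n) = b from rfl,
      e1, e2] at has
    exact has
  -- final evaluation
  have hw : w = u * (simpleT n i * (simpleT n (i+1) * (simpleT n i * v))) := by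
    rw [← hprod]
    simp [mul_assoc, hu, hv]
  refine ⟨v⁻¹ a, v⁻¹ b, v⁻¹ c, L1, L3, ?_, ?_⟩
  · rw [hw]
    simp only [Equiv.Perm.mul_apply, Equiv.Perm.coe_inv, Equiv.apply_symm_apply, sic, si1c, sib, sia, si1a]
    exact D1
  · rw [hw]
    simp only [Equiv.Perm.mul_apply, Equiv.Perm.coe_inv, Equiv.apply_symm_apply, sic, si1c, sib, sia, si1a, si1b]
    exact D3

lemma simpleT_succ_eq {n d : ℕ} (hd : d + 1 < n) :
    simpleT n (d + 1) = Equiv.swap ⟨d, by omega⟩ ⟨d + 1, hd⟩ := by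
  rw [simpleT_eq (by omega) hd]
  congr 1 <;> exact Fin.ext (by simp)

lemma simpleT_apply_fst {n d : ℕ} (hd : d + 1 < n) :
    simpleT n (d + 1) ⟨d, by omega⟩ = ⟨d + 1, hd⟩ := by
  rw [simpleT_succ_eq hd]; exact Equiv.swap_apply_left _ _

lemma simpleT_apply_snd {n d : ℕ} (hd : d + 1 < n) :
    simpleT n (d + 1) ⟨d + 1, hd⟩ = ⟨d, by omega⟩ := by
  rw [simpleT_succ_eq hd]; exact Equiv.swap_apply_right _ _

lemma simpleT_apply_other {n d : ℕ} (hd : d + 1 < n) (x : Fin n)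
    (h1 : (x : ℕ) ≠ d) (h2 : (x : ℕ) ≠ d + 1) :
    simpleT n (d + 1) x = x := by
  rw [simpleT_succ_eq hd]
  exact Equiv.swap_apply_of_ne_of_ne (fun h => h1 (congrArg Fin.val h))
    (fun h => h2 (congrArg Fin.val h))

lemma braid_of_consecutive {n d : ℕ} (w : Equiv.Perm (Fin n)) (hd : d + 2 < n)
    (h1 : w ⟨d + 1, by omega⟩ < w ⟨d, by omega⟩)
    (h2 : w ⟨d + 2, hd⟩ < w ⟨d + 1, by omega⟩) :
    ∃ (l₁ l₂ : List ℕ) (i : ℕ), IsReducedWord n w (l₁ ++ [i, i + 1, i] ++ l₂) := by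
  have hd1 : d + 1 < n := by omega
  set A : Fin n := ⟨d, by omega⟩
  set B : Fin n := ⟨d + 1, hd1⟩
  set C : Fin n := ⟨d + 2, hd⟩
  have s1A : simpleT n (d+1) A = B := simpleT_apply_fst hd1
  have s1B : simpleT n (d+1) B = A := simpleT_apply_snd hd1
  have s1C : simpleT n (d+1) C = C := simpleT_apply_other hd1 C (by simp [C]) (by simp [C])
  have s2B : simpleT n (d+2) B = C := by
    have := simpleT_apply_fst (d := d+1) hd
    exact this
  have s2C : simpleT n (d+2) C = B := by
    have := simpleT_apply_snd (d := d+1) hd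
    exact this
  have s2A : simpleT n (d+2) A = A := simpleT_apply_other hd A (by simp [A]) (by simp [A]; omega)
  have k1 : invNum n (w * simpleT n (d+1)) + 1 = invNum n w := by
    apply invNum_mul_of_gt (by omega) hd1
    have e : (⟨d + 1 - 1, by omega⟩ : Fin n) = A := Fin.ext (by simp [A])
    rw [e]; exact h1
  have k2 : invNum n (w * simpleT n (d+1) * simpleT n (d+2)) + 1
      = invNum n (w * simpleT n (d+1)) := by
    apply invNum_mul_of_gt (by omega) hd
    have e : (⟨d + 2 - 1, by omega⟩ : Fin n) = B := Fin.ext (by simp [B])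
    rw [e]
    show w (simpleT n (d+1) C) < w (simpleT n (d+1) B)
    rw [s1C, s1B]
    exact lt_trans h2 h1
  have k3 : invNum n (w * simpleT n (d+1) * simpleT n (d+2) * simpleT n (d+1)) + 1
      = invNum n (w * simpleT n (d+1) * simpleT n (d+2)) := by
    apply invNum_mul_of_gt (by omega) hd1
    have e : (⟨d + 1 - 1, by omega⟩ : Fin n) = A := Fin.ext (by simp [A])
    rw [e]
    show w (simpleT n (d+1) (simpleT n (d+2) B)) < w (simpleT n (d+1) (simpleT n (d+2) A))
    rw [s2B, s2A, s1C, s1A]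
    exact h2
  obtain ⟨l, hl1, hl2, hl3⟩ := exists_word_invNum
    (invNum n (w * simpleT n (d+1) * simpleT n (d+2) * simpleT n (d+1))) _ le_rfl
  refine ⟨l, [], d + 1, ?_⟩
  rw [isReducedWord_iff]
  have hback : ((l ++ [d+1, d+2, d+1]).map (simpleT n)).prod = w := by
    rw [List.map_append, List.prod_append, hl2]
    simp only [List.map_cons, List.map_nil, List.prod_cons, List.prod_nil, mul_one]
    rw [show (d + 1 + 1) = d + 2 from rfl]
    calc w * simpleT n (d+1) * simpleT n (d+2) * simpleT n (d+1) *
          (simpleT n (d+1) * (simpleT n (d+2) * simpleT n (d+1)))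
        = w * simpleT n (d+1) * simpleT n (d+2) *
            (simpleT n (d+1) * simpleT n (d+1)) * (simpleT n (d+2) * simpleT n (d+1)) := by
          group
      _ = w := by
          rw [simpleT_sq, mul_one, mul_assoc (w * simpleT n (d+1)), mul_assoc,
            ← mul_assoc (simpleT n (d+2)), simpleT_sq, one_mul, simpleT_sq, mul_one]
  constructor
  · constructor
    · intro x hx
      simp only [List.append_nil, List.mem_append, List.mem_cons] at hx
      rcases hx with h | h
      · exact hl1 x h
      · rcases h with rfl | h
        · omega
        · rcases h with rfl | h
          · omega
          · simp at h; omega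
    · simpa using hback
  · have hlen2 : (l ++ [d + 1, d + 1 + 1, d + 1] ++ ([] : List ℕ)).length = l.length + 3 := by
      simp
    rw [hlen2, hl3]
    omega

lemma descent_preserving {n : ℕ} (w : Equiv.Perm (Fin n))
    (hcons : ¬ ∃ (d : ℕ) (hd : d + 2 < n), w ⟨d + 2, hd⟩ < w ⟨d + 1, by omega⟩ ∧
      w ⟨d + 1, by omega⟩ < w ⟨d, by omega⟩)
    {i j k : Fin n} (hij : i < j) (hjk : j < k) (hkj : w k < w j) (hji : w j < w i) :
    ∃ (d : ℕ) (hd : d + 1 < n), w ⟨d + 1, hd⟩ < w ⟨d, by omega⟩ ∧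
      ∃ i' j' k' : Fin n, i' < j' ∧ j' < k' ∧
        (w * simpleT n (d + 1)) k' < (w * simpleT n (d + 1)) j' ∧
        (w * simpleT n (d + 1)) j' < (w * simpleT n (d + 1)) i' := by
  have hij' : (i : ℕ) < (j : ℕ) := hij
  have hjk' : (j : ℕ) < (k : ℕ) := hjk
  have mulapp : ∀ (d : ℕ) (x : Fin n), (w * simpleT n (d+1)) x = w (simpleT n (d+1) x) :=
    fun d x => rfl
  by_cases hA : (i : ℕ) + 1 < (j : ℕ)
  · -- descent between i and j
    have hval : (i : ℕ) + ((j : ℕ) - (i : ℕ)) < n := by have := j.2; omega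
    have hstart : w ⟨(i : ℕ) + ((j : ℕ) - (i : ℕ)), hval⟩ < w ⟨(i : ℕ), by omega⟩ := by
      have e1 : (⟨(i : ℕ) + ((j : ℕ) - (i : ℕ)), hval⟩ : Fin n) = j := Fin.ext (by simp; omega)
      have e2 : (⟨(i : ℕ), by omega⟩ : Fin n) = i := Fin.ext rfl
      rw [e1, e2]; exact hji
    obtain ⟨d, hd1, hd2, hd, hdesc⟩ := descent_aux w _ _ hval hstart
    have hd2' : d + 1 ≤ (j : ℕ) := by omega
    refine ⟨d, hd, hdesc, ?_⟩
    by_cases hid : (i : ℕ) = d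
    · -- i sits at d; j cannot be at d+1
      have hjd : (j : ℕ) ≠ d + 1 := by omega
      have hjgt : d + 1 < (j : ℕ) := by omega
      refine ⟨⟨d + 1, hd⟩, j, k, Fin.lt_def.mpr (by simp; omega), hjk, ?_, ?_⟩
      · rw [mulapp, mulapp, simpleT_apply_other hd j (by omega) (by omega),
          simpleT_apply_other hd k (by omega) (by omega)]
        exact hkj
      · rw [mulapp, mulapp, simpleT_apply_other hd j (by omega) (by omega),
          simpleT_apply_snd hd]
        have e : (⟨d, by omega⟩ : Fin n) = i := Fin.ext (by simp [hid])
        rw [e]; exact hji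
    · have hilt : (i : ℕ) < d := by omega
      by_cases hjd : (j : ℕ) = d + 1
      · refine ⟨i, ⟨d, by omega⟩, k, Fin.lt_def.mpr (by simp; omega),
          Fin.lt_def.mpr (by simp; omega), ?_, ?_⟩
        · rw [mulapp, mulapp, simpleT_apply_fst hd,
            simpleT_apply_other hd k (by omega) (by omega)]
          have e : (⟨d + 1, hd⟩ : Fin n) = j := Fin.ext (by simp [hjd])
          rw [e]; exact hkj
        · rw [mulapp, mulapp, simpleT_apply_fst hd,
            simpleT_apply_other hd i (by omega) (by omega)]
          have e : (⟨d + 1, hd⟩ : Fin n) = j := Fin.ext (by simp [hjd])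
          rw [e]; exact hji
      · have hjgt : d + 1 < (j : ℕ) := by omega
        refine ⟨i, j, k, hij, hjk, ?_, ?_⟩
        · rw [mulapp, mulapp, simpleT_apply_other hd j (by omega) (by omega),
            simpleT_apply_other hd k (by omega) (by omega)]
          exact hkj
        · rw [mulapp, mulapp, simpleT_apply_other hd j (by omega) (by omega),
            simpleT_apply_other hd i (by omega) (by omega)]
          exact hji
  · -- j = i + 1
    have hji1 : (j : ℕ) = (i : ℕ) + 1 := by omega
    by_cases hB : (j : ℕ) + 1 < (k : ℕ)
    · have hval : (j : ℕ) + ((k : ℕ) - (j : ℕ)) < n := by have := k.2; omega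
      have hstart : w ⟨(j : ℕ) + ((k : ℕ) - (j : ℕ)), hval⟩ < w ⟨(j : ℕ), by omega⟩ := by
        have e1 : (⟨(j : ℕ) + ((k : ℕ) - (j : ℕ)), hval⟩ : Fin n) = k := Fin.ext (by simp; omega)
        have e2 : (⟨(j : ℕ), by omega⟩ : Fin n) = j := Fin.ext rfl
        rw [e1, e2]; exact hkj
      obtain ⟨d, hd1, hd2, hd, hdesc⟩ := descent_aux w _ _ hval hstart
      have hd2' : d + 1 ≤ (k : ℕ) := by omega
      refine ⟨d, hd, hdesc, ?_⟩
      by_cases hjd : (j : ℕ) = d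
      · have hkd : (k : ℕ) ≠ d + 1 := by omega
        have hkgt : d + 1 < (k : ℕ) := by omega
        refine ⟨i, ⟨d + 1, hd⟩, k, Fin.lt_def.mpr (by simp; omega),
          Fin.lt_def.mpr (by simp; omega), ?_, ?_⟩
        · rw [mulapp, mulapp, simpleT_apply_snd hd,
            simpleT_apply_other hd k (by omega) (by omega)]
          have e : (⟨d, by omega⟩ : Fin n) = j := Fin.ext (by simp [hjd])
          rw [e]; exact hkj
        · rw [mulapp, mulapp, simpleT_apply_snd hd,
            simpleT_apply_other hd i (by omega) (by omega)]
          have e : (⟨d, by omega⟩ : Fin n) = j := Fin.ext (by simp [hjd])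
          rw [e]; exact hji
      · have hjlt : (j : ℕ) < d := by omega
        by_cases hkd : (k : ℕ) = d + 1
        · refine ⟨i, j, ⟨d, by omega⟩, hij, Fin.lt_def.mpr (by simp; omega), ?_, ?_⟩
          · rw [mulapp, mulapp, simpleT_apply_fst hd,
              simpleT_apply_other hd j (by omega) (by omega)]
            have e : (⟨d + 1, hd⟩ : Fin n) = k := Fin.ext (by simp [hkd])
            rw [e]; exact hkj
          · rw [mulapp, mulapp, simpleT_apply_other hd j (by omega) (by omega),
              simpleT_apply_other hd i (by omega) (by omega)]
            exact hji
        · have hkgt : d + 1 < (k : ℕ) := by omega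
          refine ⟨i, j, k, hij, hjk, ?_, ?_⟩
          · rw [mulapp, mulapp, simpleT_apply_other hd j (by omega) (by omega),
              simpleT_apply_other hd k (by omega) (by omega)]
            exact hkj
          · rw [mulapp, mulapp, simpleT_apply_other hd j (by omega) (by omega),
              simpleT_apply_other hd i (by omega) (by omega)]
            exact hji
    · -- consecutive triple: contradiction
      exfalso
      apply hcons
      have hki : (k : ℕ) = (i : ℕ) + 2 := by omega
      have hd : (i : ℕ) + 2 < n := by rw [← hki]; exact k.2
      refine ⟨(i : ℕ), hd, ?_, ?_⟩
      · have e1 : (⟨(i : ℕ) + 2, hd⟩ : Fin n) = k := Fin.ext (by simp; omega)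
        have e2 : (⟨(i : ℕ) + 1, by omega⟩ : Fin n) = j := Fin.ext (by simp; omega)
        rw [e1, e2]; exact hkj
      · have e2 : (⟨(i : ℕ) + 1, by omega⟩ : Fin n) = j := Fin.ext (by simp; omega)
        have e3 : (⟨(i : ℕ), by omega⟩ : Fin n) = i := Fin.ext rfl
        rw [e2, e3]; exact hji

lemma pattern_braid {n : ℕ} : ∀ (N : ℕ) (w : Equiv.Perm (Fin n)), invNum n w ≤ N →
    (∃ i j k : Fin n, i < j ∧ j < k ∧ w k < w j ∧ w j < w i) →
    ∃ (l₁ l₂ : List ℕ) (i : ℕ), IsReducedWord n w (l₁ ++ [i, i + 1, i] ++ l₂) := by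
  intro N
  induction N with
  | zero =>
    rintro w hw ⟨i, j, k, hij, hjk, hkj, hji⟩
    exfalso
    have hmem : (j, k) ∈ invSet n w := mem_invSet.mpr ⟨hjk, hkj⟩
    have : 0 < invNum n w := Finset.card_pos.mpr ⟨_, hmem⟩
    omega
  | succ N ih =>
    rintro w hw ⟨i, j, k, hij, hjk, hkj, hji⟩
    by_cases hcons : ∃ (d : ℕ) (hd : d + 2 < n), w ⟨d + 2, hd⟩ < w ⟨d + 1, by omega⟩ ∧
        w ⟨d + 1, by omega⟩ < w ⟨d, by omega⟩
    · obtain ⟨d, hd, hc1, hc2⟩ := hcons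
      exact braid_of_consecutive w hd hc2 hc1
    · obtain ⟨d, hd, hdesc, i', j', k', h1, h2, h3, h4⟩ :=
        descent_preserving w hcons hij hjk hkj hji
      have k1 : invNum n (w * simpleT n (d + 1)) + 1 = invNum n w := by
        apply invNum_mul_of_gt (by omega) hd
        have e : (⟨d + 1 - 1, by omega⟩ : Fin n) = (⟨d, by omega⟩ : Fin n) := Fin.ext (by simp)
        rw [e]; exact hdesc
      obtain ⟨l₁, l₂, i0, hred⟩ := ih (w * simpleT n (d + 1)) (by omega)
        ⟨i', j', k', h1, h2, h3, h4⟩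
      obtain ⟨⟨hv, hp⟩, hl⟩ := isReducedWord_iff.mp hred
      refine ⟨l₁, l₂ ++ [d + 1], i0, ?_⟩
      rw [isReducedWord_iff]
      have hassoc : l₁ ++ [i0, i0 + 1, i0] ++ (l₂ ++ [d + 1])
          = (l₁ ++ [i0, i0 + 1, i0] ++ l₂) ++ [d + 1] := by simp
      refine ⟨⟨?_, ?_⟩, ?_⟩
      · intro x hx
        rw [hassoc] at hx
        rcases List.mem_append.mp hx with h | h
        · exact hv x h
        · simp at h; omega
      · rw [hassoc, List.map_append, List.prod_append, hp]
        simp [mul_assoc, simpleT_sq]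
      · rw [hassoc, List.length_append, hl]
        simp only [List.length_cons, List.length_nil]
        omega

theorem stmt7 (n : ℕ) (w : Equiv.Perm (Fin n)) :
    Avoids321 w ↔ ∀ l, IsReducedWord n w l →
      ¬ ∃ (l₁ l₂ : List ℕ) (i : ℕ), l = l₁ ++ [i, i + 1, i] ++ l₂ := by
  constructor
  · rintro hav l hred ⟨l₁, l₂, i, rfl⟩
    exact hav (braid_factor_pattern hred)
  · rintro h ⟨i, j, k, hij, hjk, hkj, hji⟩
    obtain ⟨l₁, l₂, i0, hred⟩ :=
      pattern_braid (invNum n w) w le_rfl ⟨i, j, k, hij, hjk, hkj, hji⟩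
    exact h _ hred ⟨l₁, l₂, i0, rfl⟩
end

section
/- If w is a boolean permutation, then there do not exist three consecutive integers i, i+1, i+2 all appearing in the second row of the RSK insertion tableau P(w). -/
theorem rowInsert_nil (x : ℕ) : rowInsert [] x = ([x], none) := rfl

theorem rowInsert_cons (y : ℕ) (r : List ℕ) (x : ℕ) :
    rowInsert (y :: r) x = if x < y then (x :: r, some y)
      else ((y :: (rowInsert r x).1), (rowInsert r x).2) := by
  unfold rowInsert
  rw [List.findIdx?_cons]
  by_cases h : x < y
  · simp [h]
  · simp only [h, decide_eq_false, if_neg, Bool.false_eq_true, not_false_iff, if_false]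
    rcases hf : List.findIdx? (fun y => decide (x < y)) r with _ | i
    · simp
    · simp

theorem rowInsert_mem_self (r : List ℕ) (x : ℕ) : x ∈ (rowInsert r x).1 := by
  induction r with
  | nil => simp [rowInsert_nil]
  | cons y r ih =>
    rw [rowInsert_cons]
    by_cases h : x < y <;> simp [h, ih]

theorem rowInsert_fst_subset {r : List ℕ} {x z : ℕ} (h : z ∈ (rowInsert r x).1) :
    z ∈ r ∨ z = x := by
  induction r with
  | nil => simp [rowInsert_nil] at h; tauto
  | cons y r ih =>
    rw [rowInsert_cons] at h
    by_cases hxy : x < y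
    · simp [hxy] at h
      rcases h with h | h
      · right; exact h
      · left; exact List.mem_cons_of_mem _ h
    · simp only [if_neg hxy] at h
      rcases List.mem_cons.1 h with rfl | h
      · left; exact List.mem_cons_self
      · rcases ih h with h | h
        · left; exact List.mem_cons_of_mem _ h
        · right; exact h

theorem rowInsert_mem_or_bump {r : List ℕ} {x z : ℕ} (h : z ∈ r) :
    z ∈ (rowInsert r x).1 ∨ (rowInsert r x).2 = some z := by
  induction r with
  | nil => simp at h
  | cons y r ih =>
    rw [rowInsert_cons]
    by_cases hxy : x < y
    · simp only [if_pos hxy]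
      rcases List.mem_cons.1 h with rfl | h
      · right; rfl
      · left; simp [h]
    · simp only [if_neg hxy]
      rcases List.mem_cons.1 h with rfl | h
      · left; simp
      · rcases ih h with h | h
        · left; simp [h]
        · right; simpa using h

theorem rowInsert_snd_mem {r : List ℕ} {x v : ℕ} (h : (rowInsert r x).2 = some v) :
    v ∈ r ∧ x < v := by
  induction r with
  | nil => simp [rowInsert_nil] at h
  | cons y r ih =>
    rw [rowInsert_cons] at h
    by_cases hxy : x < y
    · simp only [if_pos hxy] at h
      cases h
      exact ⟨List.mem_cons_self, hxy⟩
    · simp only [if_neg hxy] at h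
      rcases ih h with ⟨h1, h2⟩
      exact ⟨List.mem_cons_of_mem _ h1, h2⟩

theorem rowInsert_snd_min {r : List ℕ} {x v : ℕ} (hs : r.Pairwise (· < ·))
    (h : (rowInsert r x).2 = some v) : ∀ y ∈ r, x < y → v ≤ y := by
  induction r with
  | nil => simp [rowInsert_nil] at h
  | cons a r ih =>
    rw [rowInsert_cons] at h
    rw [List.pairwise_cons] at hs
    by_cases hxy : x < a
    · simp only [if_pos hxy] at h
      cases h
      intro y hy _
      rcases List.mem_cons.1 hy with rfl | hy
      · exact le_rfl
      · exact le_of_lt (hs.1 y hy)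
    · simp only [if_neg hxy] at h
      intro y hy hxy'
      rcases List.mem_cons.1 hy with rfl | hy
      · exact absurd hxy' hxy
      · exact ih hs.2 h y hy hxy'

theorem rowInsert_sorted {r : List ℕ} {x : ℕ} (hs : r.Pairwise (· < ·)) (hx : x ∉ r) :
    ((rowInsert r x).1).Pairwise (· < ·) := by
  induction r with
  | nil => simp [rowInsert_nil]
  | cons a r ih =>
    rw [List.pairwise_cons] at hs
    rw [rowInsert_cons]
    by_cases hxy : x < a
    · simp only [if_pos hxy]
      rw [List.pairwise_cons]
      exact ⟨fun b hb => lt_trans hxy (hs.1 b hb), hs.2⟩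
    · simp only [if_neg hxy]
      rw [List.pairwise_cons]
      have hxa : a < x := by
        rcases Nat.lt_trichotomy x a with h | h | h
        · exact absurd h hxy
        · exact absurd h.symm (by simp at hx; tauto)
        · exact h
      constructor
      · intro b hb
        rcases rowInsert_fst_subset hb with h | rfl
        · exact hs.1 b h
        · exact hxa
      · exact ih hs.2 (fun hmem => hx (List.mem_cons_of_mem _ hmem))

def step1 (r : List ℕ) (x : ℕ) : List ℕ := (rowInsert r x).1

def r1after (s : List ℕ) : List ℕ := s.foldl step1 []

def bumpAt (s : List ℕ) (t : ℕ) : Option ℕ :=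
  (rowInsert (r1after (s.take t)) (s.getD t 0)).2

theorem foldl_step1_subset : ∀ (p : List ℕ) (r : List ℕ) {z : ℕ},
    z ∈ p.foldl step1 r → z ∈ r ∨ z ∈ p := by
  intro p
  induction p with
  | nil => intro r z h; exact Or.inl h
  | cons x p ih =>
    intro r z h
    rcases ih (step1 r x) h with h | h
    · rcases rowInsert_fst_subset h with h | rfl
      · exact Or.inl h
      · exact Or.inr (List.mem_cons_self)
    · exact Or.inr (List.mem_cons_of_mem _ h)

theorem r1after_subset {p : List ℕ} {z : ℕ} (h : z ∈ r1after p) : z ∈ p := by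
  rcases foldl_step1_subset p [] h with h | h
  · simp at h
  · exact h

theorem r1after_sorted {p : List ℕ} (hnd : p.Nodup) : (r1after p).Pairwise (· < ·) := by
  induction p using List.reverseRecOn with
  | nil => simp [r1after]
  | append_singleton q a ih =>
    have hq : q.Nodup ∧ a ∉ q := by
      rw [List.nodup_append] at hnd
      refine ⟨hnd.1, fun hmem => ?_⟩
      exact hnd.2.2 a hmem a (List.mem_singleton_self a) rfl
    have : r1after (q ++ [a]) = step1 (r1after q) a := by
      simp [r1after, List.foldl_append]
    rw [this]
    exact rowInsert_sorted (ih hq.1) (fun hm => hq.2 (r1after_subset hm))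

theorem leaveR1 : ∀ (p : List ℕ) (v : ℕ), v ∈ p → v ∉ r1after p →
    ∃ t, t < p.length ∧ (rowInsert (r1after (p.take t)) (p.getD t 0)).2 = some v := by
  intro p
  induction p using List.reverseRecOn with
  | nil => intro v h; simp at h
  | append_singleton q a ih =>
    intro v hv hnot
    have hr1 : r1after (q ++ [a]) = step1 (r1after q) a := by
      simp [r1after, List.foldl_append]
    rcases List.mem_append.1 hv with hv | hv
    · by_cases hmem : v ∈ r1after q
      · -- v was in r1 of q; it must have been bumped at the last step
        rcases rowInsert_mem_or_bump (x := a) hmem with h | h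
        · exact absurd (hr1 ▸ h) hnot
        · refine ⟨q.length, by simp, ?_⟩
          rw [List.take_left, List.getD_eq_getElem?_getD, List.getElem?_concat_length]
          exact h
      · rcases ih v hv hmem with ⟨t, ht, hb⟩
        refine ⟨t, by simp; omega, ?_⟩
        have h1 : (q ++ [a]).take t = q.take t := List.take_append_of_le_length (le_of_lt ht)
        have h2 : (q ++ [a]).getD t 0 = q.getD t 0 := by
          rw [List.getD_eq_getElem?_getD, List.getD_eq_getElem?_getD, List.getElem?_append,
            if_pos ht]
        rw [h1, h2]
        exact hb
    · -- v = a, but a ∈ step1 (r1after q) a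
      rw [List.mem_singleton] at hv
      subst hv
      exact absurd (hr1 ▸ rowInsert_mem_self (r1after q) v) hnot

theorem mem_take_getD {s : List ℕ} {t v : ℕ} (ht : t ≤ s.length) (h : v ∈ s.take t) :
    ∃ p, p < t ∧ s.getD p 0 = v := by
  rcases List.mem_iff_getElem.1 h with ⟨n, hn, hval⟩
  have hn2 : n < t ⊓ s.length := by rw [← List.length_take]; exact hn
  have hn' : n < t := lt_of_lt_of_le hn2 (min_le_left _ _)
  have hns : n < s.length := lt_of_lt_of_le hn2 (min_le_right _ _)
  refine ⟨n, hn', ?_⟩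
  rw [List.getD_eq_getElem _ _ hns, ← List.getElem_take (h := hn)]
  exact hval

theorem getD_mem_take {s : List ℕ} {t q : ℕ} (hq : q < t) (hqs : q < s.length) :
    s.getD q 0 ∈ s.take t := by
  rw [List.getD_eq_getElem _ _ hqs]
  apply List.mem_iff_getElem.2
  refine ⟨q, by rw [List.length_take]; omega, ?_⟩
  exact List.getElem_take

theorem bump_event (s : List ℕ) (hnd : s.Nodup) {t v : ℕ} (ht : t < s.length)
    (h : bumpAt s t = some v) :
    s.getD t 0 < v ∧ (∃ p, p < t ∧ s.getD p 0 = v) ∧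
    (∀ x q, s.getD t 0 < x → x < v → q < t → s.getD q 0 = x →
      ∃ t', t' < t ∧ bumpAt s t' = some x) := by
  have hsub : (s.take t).Nodup := (List.take_sublist t s).nodup hnd
  have hsort := r1after_sorted hsub
  unfold bumpAt at h
  obtain ⟨hmem, hlt⟩ := rowInsert_snd_mem h
  refine ⟨hlt, mem_take_getD (le_of_lt ht) (r1after_subset hmem), ?_⟩
  intro x q hux hxv hq hval
  have hxtake : x ∈ s.take t := hval ▸ getD_mem_take hq (lt_trans hq ht)
  have hxnotr1 : x ∉ r1after (s.take t) := by
    intro hc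
    exact absurd (rowInsert_snd_min hsort h x hc hux) (by omega)
  obtain ⟨t', ht', hb⟩ := leaveR1 (s.take t) x hxtake hxnotr1
  rw [List.length_take] at ht'
  have ht't : t' < t := lt_of_lt_of_le ht' (min_le_left _ _)
  refine ⟨t', ht't, ?_⟩
  unfold bumpAt
  have h1 : (s.take t).take t' = s.take t' := by
    rw [List.take_take]; congr 1; omega
  have h2 : (s.take t).getD t' 0 = s.getD t' 0 := by
    rw [List.getD_eq_getElem?_getD, List.getD_eq_getElem?_getD, List.getElem?_take, if_pos ht't]
  rw [h1, h2] at hb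
  exact hb

def outs : List ℕ → List ℕ → List ℕ
  | _, [] => []
  | r, x :: s =>
    match (rowInsert r x).2 with
    | none => outs (step1 r x) s
    | some y => y :: outs (step1 r x) s

theorem bumpInsert_cons_eq (r : List ℕ) (rest : List (List ℕ)) (x : ℕ) :
    bumpInsert (r :: rest) x = (rowInsert r x).1 ::
      (match (rowInsert r x).2 with
       | none => rest
       | some y => bumpInsert rest y) := by
  show (match rowInsert r x with
    | (r', none) => r' :: rest
    | (r', some y) => r' :: bumpInsert rest y) = _
  rcases h : rowInsert r x with ⟨r', b⟩
  cases b <;> simp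

theorem ptab_decomp : ∀ (l : List ℕ) (r : List ℕ) (rest : List (List ℕ)),
    List.foldl bumpInsert (r :: rest) l =
      (l.foldl step1 r) :: List.foldl bumpInsert rest (outs r l) := by
  intro l
  induction l with
  | nil => intro r rest; rfl
  | cons x s ih =>
    intro r rest
    have houts : outs r (x :: s) = (match (rowInsert r x).2 with
      | none => outs (step1 r x) s
      | some y => y :: outs (step1 r x) s) := rfl
    rw [List.foldl_cons, bumpInsert_cons_eq, houts]
    rcases h : (rowInsert r x).2 with _ | y
    · rw [ih]
      rfl
    · rw [ih]
      rfl

theorem mem_bumpInsert {t : List (List ℕ)} {x z : ℕ} {row : List ℕ}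
    (hrow : row ∈ bumpInsert t x) (hz : z ∈ row) :
    (∃ r ∈ t, z ∈ r) ∨ z = x := by
  induction t generalizing x with
  | nil =>
    simp [bumpInsert] at hrow
    subst hrow
    simp at hz
    exact Or.inr hz
  | cons r rest ih =>
    rw [bumpInsert_cons_eq] at hrow
    rcases List.mem_cons.1 hrow with rfl | hrow
    · rcases rowInsert_fst_subset hz with h | h
      · exact Or.inl ⟨r, List.mem_cons_self, h⟩
      · exact Or.inr h
    · rcases hb : (rowInsert r x).2 with _ | y
      · rw [hb] at hrow
        exact Or.inl ⟨row, List.mem_cons_of_mem _ hrow, hz⟩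
      · rw [hb] at hrow
        rcases ih hrow with ⟨r', hr', hzr'⟩ | rfl
        · exact Or.inl ⟨r', List.mem_cons_of_mem _ hr', hzr'⟩
        · exact Or.inl ⟨r, List.mem_cons_self, (rowInsert_snd_mem hb).1⟩

theorem mem_foldl_bumpInsert : ∀ (l : List ℕ) (t : List (List ℕ)) {z : ℕ} {row : List ℕ},
    row ∈ List.foldl bumpInsert t l → z ∈ row → (∃ r ∈ t, z ∈ r) ∨ z ∈ l := by
  intro l
  induction l with
  | nil => intro t z row h hz; exact Or.inl ⟨row, h, hz⟩
  | cons x s ih =>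
    intro t z row h hz
    rw [List.foldl_cons] at h
    rcases ih _ h hz with ⟨r, hr, hzr⟩ | h
    · rcases mem_bumpInsert hr hzr with h | rfl
      · exact Or.inl h
      · exact Or.inr (List.mem_cons_self)
    · exact Or.inr (List.mem_cons_of_mem _ h)

theorem outs_event : ∀ (s r : List ℕ) {v : ℕ}, v ∈ outs r s →
    ∃ t, t < s.length ∧ (rowInsert (List.foldl step1 r (s.take t)) (s.getD t 0)).2 = some v := by
  intro s
  induction s with
  | nil => intro r v h; simp [outs] at h
  | cons x s ih =>
    intro r v h
    have houts : outs r (x :: s) = (match (rowInsert r x).2 with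
      | none => outs (step1 r x) s
      | some y => y :: outs (step1 r x) s) := rfl
    rw [houts] at h
    rcases hb : (rowInsert r x).2 with _ | y
    · rw [hb] at h
      rcases ih (step1 r x) h with ⟨t, ht, hev⟩
      refine ⟨t + 1, by simpa using Nat.succ_lt_succ ht, ?_⟩
      simpa using hev
    · rw [hb] at h
      rcases List.mem_cons.1 h with rfl | h
      · exact ⟨0, by simp, by simpa using hb⟩
      · rcases ih (step1 r x) h with ⟨t, ht, hev⟩
        refine ⟨t + 1, by simpa using Nat.succ_lt_succ ht, ?_⟩
        simpa using hev

theorem row2_bump {s : List ℕ} {v : ℕ} (h : v ∈ Row2 (Ptab s)) :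
    ∃ t, t < s.length ∧ bumpAt s t = some v := by
  rcases s with _ | ⟨x, s'⟩
  · simp [Ptab, Row2] at h
  · have hP : Ptab (x :: s') =
        (s'.foldl step1 [x]) :: List.foldl bumpInsert [] (outs [x] s') := by
      show List.foldl bumpInsert [] (x :: s') = _
      rw [List.foldl_cons]
      show List.foldl bumpInsert [[x]] s' = _
      exact ptab_decomp s' [x] []
    rw [hP] at h
    set T := List.foldl bumpInsert [] (outs [x] s') with hT
    have hmem : v ∈ outs [x] s' := by
      rcases hTc : T with _ | ⟨r0, rest⟩
      · rw [Row2, hTc] at h; simp at h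
      · have hrow : v ∈ r0 := by rw [Row2, hTc] at h; simpa using h
        have : r0 ∈ T := by rw [hTc]; exact List.mem_cons_self
        rcases mem_foldl_bumpInsert (outs [x] s') [] (hT ▸ this) hrow with ⟨r, hr, _⟩ | h2
        · simp at hr
        · exact h2
    rcases outs_event s' [x] hmem with ⟨t, ht, hev⟩
    refine ⟨t + 1, by simpa using Nat.succ_lt_succ ht, ?_⟩
    show (rowInsert (r1after ((x :: s').take (t+1))) ((x :: s').getD (t+1) 0)).2 = some v
    have h1 : r1after ((x :: s').take (t+1)) = List.foldl step1 [x] (s'.take t) := by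
      show List.foldl step1 [] (x :: s'.take t) = _
      rw [List.foldl_cons]
      have : step1 [] x = [x] := by rw [step1, rowInsert_nil]
      rw [this]
    rw [h1]
    simpa using hev

theorem nodup_getD {s : List ℕ} (hnd : s.Nodup) {a b : ℕ} (ha : a < s.length)
    (hb : b < s.length) (h : s.getD a 0 = s.getD b 0) : a = b := by
  rw [List.getD_eq_getElem _ _ ha, List.getD_eq_getElem _ _ hb] at h
  exact (hnd.getElem_inj_iff).1 h

theorem kernel (s : List ℕ) (hnd : s.Nodup) {i : ℕ}
    (h0 : i ∈ Row2 (Ptab s)) (h1 : i+1 ∈ Row2 (Ptab s)) (h2 : i+2 ∈ Row2 (Ptab s)) :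
    (∃ a b c, a < b ∧ b < c ∧ c < s.length ∧
      s.getD c 0 < s.getD b 0 ∧ s.getD b 0 < s.getD a 0) ∨
    (∃ a b c d, a < b ∧ b < c ∧ c < d ∧ d < s.length ∧
      s.getD c 0 < s.getD d 0 ∧ s.getD d 0 < s.getD a 0 ∧ s.getD a 0 < s.getD b 0) := by
  obtain ⟨T0, hT0len, hbump0⟩ := row2_bump h0
  obtain ⟨T1, hT1len, hbump1⟩ := row2_bump h1
  obtain ⟨T2, hT2len, hbump2⟩ := row2_bump h2
  obtain ⟨hu0T, ⟨p0, hp0T, hp0v⟩, _⟩ := bump_event s hnd hT0len hbump0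
  obtain ⟨hu1T, ⟨p1, hp1T, hp1v⟩, _⟩ := bump_event s hnd hT1len hbump1
  obtain ⟨hu2T, ⟨p2, hp2T, hp2v⟩, hstar2⟩ := bump_event s hnd hT2len hbump2
  have hp0len : p0 < s.length := lt_trans hp0T hT0len
  have hp1len : p1 < s.length := lt_trans hp1T hT1len
  have hp2len : p2 < s.length := lt_trans hp2T hT2len
  have hp01 : p0 ≠ p1 := fun h => by rw [h, hp1v] at hp0v; omega
  have hp12 : p1 ≠ p2 := fun h => by rw [h, hp2v] at hp1v; omega
  rcases Nat.lt_or_ge p1 p0 with hA | hBA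
  · -- 321 : (i+1)@p1, i@p0, u0@T0
    exact Or.inl ⟨p1, p0, T0, hA, hp0T, hT0len, by rw [hp0v]; exact hu0T, by
      rw [hp0v, hp1v]; omega⟩
  · have hp0p1 : p0 < p1 := lt_of_le_of_ne hBA hp01
    rcases Nat.lt_or_ge p2 p1 with hB1 | hB2
    · -- 321 : (i+2)@p2, (i+1)@p1, u1@T1
      exact Or.inl ⟨p2, p1, T1, hB1, hp1T, hT1len, by rw [hp1v]; exact hu1T, by
        rw [hp1v, hp2v]; omega⟩
    · have hp1p2 : p1 < p2 := by omega
      -- main case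
      have hu2i : s.getD T2 0 < i := by
        have h1' : s.getD T2 0 ≠ i + 1 := fun h => by
          have := nodup_getD hnd hT2len hp1len (by rw [h, hp1v])
          omega
        have h2' : s.getD T2 0 ≠ i := fun h => by
          have := nodup_getD hnd hT2len hp0len (by rw [h, hp0v])
          omega
        omega
      obtain ⟨t1, ht1T2, hb1⟩ := hstar2 (i+1) p1 (by omega) (by omega)
        (lt_trans hp1p2 hp2T) hp1v
      have ht1len : t1 < s.length := lt_trans ht1T2 hT2len
      obtain ⟨hv1T, ⟨q1, hq1t1, hq1v⟩, hstar1⟩ := bump_event s hnd ht1len hb1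
      have hq1 : q1 = p1 := nodup_getD hnd (lt_trans hq1t1 ht1len) hp1len
        (by rw [hq1v, hp1v])
      have hp1t1 : p1 < t1 := hq1 ▸ hq1t1
      have hu1i : s.getD t1 0 < i := by
        have h2' : s.getD t1 0 ≠ i := fun h => by
          have := nodup_getD hnd ht1len hp0len (by rw [h, hp0v])
          omega
        omega
      obtain ⟨t0, ht0t1, hb0⟩ := hstar1 i p0 hu1i (by omega) (lt_trans hp0p1 hp1t1) hp0v
      have ht0len : t0 < s.length := lt_trans ht0t1 ht1len
      obtain ⟨hv0T, ⟨q0, hq0t0, hq0v⟩, _⟩ := bump_event s hnd ht0len hb0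
      have hq0 : q0 = p0 := nodup_getD hnd (lt_trans hq0t0 ht0len) hp0len
        (by rw [hq0v, hp0v])
      have hp0t0 : p0 < t0 := hq0 ▸ hq0t0
      -- u values
      have hu01 : s.getD t0 0 ≠ s.getD t1 0 := fun h => by
        have := nodup_getD hnd ht0len ht1len h; omega
      have hu12 : s.getD t1 0 ≠ s.getD T2 0 := fun h => by
        have := nodup_getD hnd ht1len hT2len h; omega
      rcases Nat.lt_or_ge (s.getD t1 0) (s.getD t0 0) with hc1 | hc1
      · -- 321 : i@p0, u0@t0, u1@t1
        exact Or.inl ⟨p0, t0, t1, hp0t0, ht0t1, ht1len, hc1, by rw [hp0v]; exact hv0T⟩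
      · have hu0lt1 : s.getD t0 0 < s.getD t1 0 := by omega
        rcases Nat.lt_or_ge (s.getD T2 0) (s.getD t1 0) with hc2 | hc2
        · -- 321 : (i+1)@p1, u1@t1, u2@T2
          exact Or.inl ⟨p1, t1, T2, hp1t1, ht1T2, hT2len, hc2, by rw [hp1v]; exact hv1T⟩
        · have hu1lt2 : s.getD t1 0 < s.getD T2 0 := by omega
          rcases Nat.lt_or_ge p1 t0 with hc3 | hc3
          · -- 3412 : i@p0, (i+1)@p1, u0@t0, u1@t1
            exact Or.inr ⟨p0, p1, t0, t1, hp0p1, hc3, ht0t1, ht1len, hu0lt1,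
              by rw [hp0v]; exact hu1i, by rw [hp0v, hp1v]; omega⟩
          · have ht0p1 : t0 < p1 := by
              rcases Nat.lt_or_ge t0 p1 with h | h
              · exact h
              · have ht0p1' : t0 = p1 := by omega
                rw [ht0p1'] at hv0T
                rw [hp1v] at hv0T
                omega
            rcases Nat.lt_or_ge p2 t1 with hc4 | hc4
            · -- 3412 : (i+1)@p1, (i+2)@p2, u1@t1, u2@T2
              exact Or.inr ⟨p1, p2, t1, T2, hp1p2, hc4, ht1T2, hT2len, hu1lt2,
                by rw [hp1v]; omega, by rw [hp1v, hp2v]; omega⟩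
            · have ht1p2 : t1 < p2 := by
                rcases Nat.lt_or_ge t1 p2 with h | h
                · exact h
                · have ht1p2' : t1 = p2 := by omega
                  rw [ht1p2'] at hu1i
                  rw [hp2v] at hu1i
                  omega
              -- 3412 : i@p0, (i+1)@p1, u1@t1, u2@T2
              exact Or.inr ⟨p0, p1, t1, T2, hp0p1, hp1t1, ht1T2, hT2len, hu1lt2,
                by rw [hp0v]; omega, by rw [hp0v, hp1v]; omega⟩

theorem simpleT_block {n a b : ℕ} (hb1 : 1 ≤ b) (hbn : b < n) (hne : b ≠ a)
    (x : Fin n) : ((simpleT n b x : ℕ) < a ↔ (x : ℕ) < a) := by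
  have h : 1 ≤ b ∧ b < n := ⟨hb1, hbn⟩
  rw [simpleT, dif_pos h]
  rw [Equiv.swap_apply_def]
  split_ifs with h1 h2
  · have : (x : ℕ) = b - 1 := by rw [h1]
    simp only [this]
    omega
  · have : (x : ℕ) = b := by rw [h2]
    simp only [this]
    omega
  · rfl

theorem prod_block {n a : ℕ} : ∀ (l : List ℕ), (∀ b ∈ l, 1 ≤ b ∧ b < n) → a ∉ l →
    ∀ x : Fin n, (((l.map (simpleT n)).prod x : ℕ) < a ↔ (x : ℕ) < a) := by
  intro l
  induction l with
  | nil => intro _ _ x; simp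
  | cons b l ih =>
    intro hrange hnotin x
    rw [List.map_cons, List.prod_cons]
    have hb := hrange b (List.mem_cons_self)
    have hba : b ≠ a := fun h => hnotin (h ▸ List.mem_cons_self)
    rw [Equiv.Perm.mul_apply]
    rw [simpleT_block hb.1 hb.2 hba]
    exact ih (fun c hc => hrange c (List.mem_cons_of_mem _ hc))
      (fun hc => hnotin (List.mem_cons_of_mem _ hc)) x

theorem avoid_step {n a : ℕ} (ha1 : 1 ≤ a) (han : a < n) (u : Equiv.Perm (Fin n))
    (hu3 : Avoids321 u) (hu4 : Avoids3412 u)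
    (hbl : ∀ x : Fin n, ((u x : ℕ) < a ↔ (x : ℕ) < a)) :
    Avoids321 (simpleT n a * u) ∧ Avoids3412 (simpleT n a * u) := by
  set w := simpleT n a * u with hw
  have hA : (a - 1) < n := by omega
  set A : Fin n := ⟨a - 1, hA⟩ with hAdef
  set B : Fin n := ⟨a, han⟩ with hBdef
  have hsimp : simpleT n a = Equiv.swap A B := by
    rw [simpleT, dif_pos ⟨ha1, han⟩]
  -- value description of w
  have hwval : ∀ x : Fin n,
      ((u x : ℕ) = a - 1 ∧ (w x : ℕ) = a) ∨
      ((u x : ℕ) = a ∧ (w x : ℕ) = a - 1) ∨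
      ((u x : ℕ) ≠ a - 1 ∧ (u x : ℕ) ≠ a ∧ (w x : ℕ) = (u x : ℕ)) := by
    intro x
    have : w x = Equiv.swap A B (u x) := by rw [hw, Equiv.Perm.mul_apply, hsimp]
    rw [this, Equiv.swap_apply_def]
    split_ifs with h1 h2
    · left
      constructor
      · rw [h1]
      · rfl
    · right; left
      constructor
      · rw [h2]
      · rfl
    · right; right
      refine ⟨fun hc => h1 (Fin.ext hc), fun hc => h2 (Fin.ext hc), rfl⟩
  have hinj : ∀ x y : Fin n, x ≠ y → (u x : ℕ) ≠ (u y : ℕ) := by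
    intro x y hne hc
    exact hne (u.injective (Fin.ext hc))
  constructor
  · rintro ⟨x, y, z, hxy, hyz, h1, h2⟩
    have hxy' : (x : ℕ) < y := hxy
    have hyz' : (y : ℕ) < z := hyz
    have h1' : (w z : ℕ) < (w y : ℕ) := h1
    have h2' : (w y : ℕ) < (w x : ℕ) := h2
    have bx := hbl x; have by' := hbl y; have bz := hbl z
    have dxy := hinj x y (by intro h; subst h; omega)
    have dxz := hinj x z (by intro h; subst h; omega)
    have dyz := hinj y z (by intro h; subst h; omega)
    rcases hwval x with ⟨e1, f1⟩ | ⟨e1, f1⟩ | ⟨e1, e1', f1⟩ <;>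
      rcases hwval y with ⟨e2, f2⟩ | ⟨e2, f2⟩ | ⟨e2, e2', f2⟩ <;>
      rcases hwval z with ⟨e3, f3⟩ | ⟨e3, f3⟩ | ⟨e3, e3', f3⟩ <;>
      first
        | omega
        | exact hu3 ⟨x, y, z, hxy, hyz, Fin.lt_def.2 (by omega), Fin.lt_def.2 (by omega)⟩
  · rintro ⟨x, y, z, t, hxy, hyz, hzt, h1, h2, h3⟩
    have hxy' : (x : ℕ) < y := hxy
    have hyz' : (y : ℕ) < z := hyz
    have hzt' : (z : ℕ) < t := hzt
    have h1' : (w z : ℕ) < (w t : ℕ) := h1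
    have h2' : (w t : ℕ) < (w x : ℕ) := h2
    have h3' : (w x : ℕ) < (w y : ℕ) := h3
    have bx := hbl x; have by' := hbl y; have bz := hbl z; have bt := hbl t
    have dxy := hinj x y (by intro h; subst h; omega)
    have dxz := hinj x z (by intro h; subst h; omega)
    have dxt := hinj x t (by intro h; subst h; omega)
    have dyz := hinj y z (by intro h; subst h; omega)
    have dyt := hinj y t (by intro h; subst h; omega)
    have dzt := hinj z t (by intro h; subst h; omega)
    rcases hwval x with ⟨e1, f1⟩ | ⟨e1, f1⟩ | ⟨e1, e1', f1⟩ <;>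
      rcases hwval y with ⟨e2, f2⟩ | ⟨e2, f2⟩ | ⟨e2, e2', f2⟩ <;>
      rcases hwval z with ⟨e3, f3⟩ | ⟨e3, f3⟩ | ⟨e3, e3', f3⟩ <;>
      rcases hwval t with ⟨e4, f4⟩ | ⟨e4, f4⟩ | ⟨e4, e4', f4⟩ <;>
      first
        | omega
        | exact hu4 ⟨x, y, z, t, hxy, hyz, hzt, Fin.lt_def.2 (by omega),
            Fin.lt_def.2 (by omega), Fin.lt_def.2 (by omega)⟩

theorem prod_avoids {n : ℕ} : ∀ (l : List ℕ), l.Nodup → (∀ b ∈ l, 1 ≤ b ∧ b < n) →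
    Avoids321 ((l.map (simpleT n)).prod) ∧ Avoids3412 ((l.map (simpleT n)).prod) := by
  intro l
  induction l with
  | nil =>
    intro _ _
    constructor
    · rintro ⟨x, y, z, hxy, hyz, h1, h2⟩
      simp at h1 h2
      have : (x:ℕ) < y := hxy
      have : (y:ℕ) < z := hyz
      have : (z:ℕ) < (y:ℕ) := h1
      omega
    · rintro ⟨x, y, z, t, hxy, hyz, hzt, h1, h2, h3⟩
      simp at h1 h2 h3
      have : (x:ℕ) < y := hxy
      have h2'' : (t:ℕ) < (x:ℕ) := h2
      have : (z:ℕ) < t := hzt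
      have : (y:ℕ) < z := hyz
      omega
  | cons b l ih =>
    intro hnd hrange
    rw [List.map_cons, List.prod_cons]
    have hb := hrange b (List.mem_cons_self)
    have hnotin : b ∉ l := (List.nodup_cons.1 hnd).1
    have ihl := ih (List.nodup_cons.1 hnd).2 (fun c hc => hrange c (List.mem_cons_of_mem _ hc))
    exact avoid_step hb.1 hb.2 _ ihl.1 ihl.2
      (prod_block l (fun c hc => hrange c (List.mem_cons_of_mem _ hc)) hnotin)

theorem stmt11 (n : ℕ) (w : Equiv.Perm (Fin n)) (h : BooleanPerm n w) :
    ¬ ∃ i : ℕ, i ∈ Row2 (Ptab (oneLine w)) ∧ i + 1 ∈ Row2 (Ptab (oneLine w)) ∧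
      i + 2 ∈ Row2 (Ptab (oneLine w)) := by
  rintro ⟨i, h0, h1, h2⟩
  obtain ⟨l, ⟨⟨hrange, hprod⟩, _⟩, hnodup⟩ := h
  have hav := prod_avoids l hnodup hrange
  rw [hprod] at hav
  have hlen : (oneLine w).length = n := by simp [oneLine]
  have hnd : (oneLine w).Nodup := by
    rw [oneLine, List.nodup_ofFn]
    intro x y hxy
    have hxy' : (w x : ℕ) + 1 = (w y : ℕ) + 1 := hxy
    exact w.injective (Fin.ext (by omega))
  have hget : ∀ (c : ℕ) (hc : c < n), (oneLine w).getD c 0 = (w ⟨c, hc⟩ : ℕ) + 1 := by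
    intro c hc
    rw [oneLine, List.getD_eq_getElem _ _ (by simpa using hc)]
    simp
  rcases kernel (oneLine w) hnd h0 h1 h2 with
    ⟨a, b, c, hab, hbc, hc, hv1, hv2⟩ | ⟨a, b, c, d, hab, hbc, hcd, hd, hv1, hv2, hv3⟩
  · have hcn : c < n := hlen ▸ hc
    have hbn : b < n := by omega
    have han : a < n := by omega
    refine hav.1 ⟨⟨a, han⟩, ⟨b, hbn⟩, ⟨c, hcn⟩, hab, hbc, ?_, ?_⟩
    · rw [Fin.lt_def]
      have e1 := hget c hcn
      have e2 := hget b hbn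
      omega
    · rw [Fin.lt_def]
      have e1 := hget b hbn
      have e2 := hget a han
      omega
  · have hdn : d < n := hlen ▸ hd
    have hcn : c < n := by omega
    have hbn : b < n := by omega
    have han : a < n := by omega
    refine hav.2 ⟨⟨a, han⟩, ⟨b, hbn⟩, ⟨c, hcn⟩, ⟨d, hdn⟩, hab, hbc, hcd, ?_, ?_, ?_⟩
    · rw [Fin.lt_def]
      have e1 := hget c hcn
      have e2 := hget d hdn
      omega
    · rw [Fin.lt_def]
      have e1 := hget d hdn
      have e2 := hget a han
      omega
    · rw [Fin.lt_def]
      have e1 := hget a han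
      have e2 := hget b hbn
      omega
end
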